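/- arXiv:1602.04777 — 5 statements merged into one kernel-verified Lean document; each statement's English description precedes it below -/
import Mathlib

section
/- For a partition n = (n_N > ... > n_1) of distinct non-negative integers and the rank-one matrix A = u v^T with u, v in F^N (F a field), the determinant of sum_{j=1}^m c_{n_j} A^{∘n_j} (where ∘ denotes entrywise/Hadamard power) equals Δ_N(u) Δ_N(v) times the sum over all N-element subsets n' of n of s_{λ(n')}(u) s_{λ(n')}(v) ∏_k c_{n'_k}, where λ(n') is obtained by subtracting the staircase (N-1,...,1,0) from n' and Δ_N denotes the Vandermonde determinant. -/
open Matrix BigOperators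

/-- Complete homogeneous symmetric polynomial `h_k`, as a function of a point `x ∈ F^N`. -/
def hfun {F : Type*} [CommRing F] {N : ℕ} (x : Fin N → F) (k : ℕ) : F :=
  ∑ d ∈ Finset.univ.filter (fun d : Fin N → Fin (k + 1) => ∑ i, (d i : ℕ) = k),
    ∏ i, x i ^ (d i : ℕ)

/-- Schur polynomial (via the Jacobi–Trudi identity) of the partition `lam`,
evaluated at the point `x ∈ F^N`. -/
def schurAt {F : Type*} [CommRing F] {N : ℕ} (x : Fin N → F) (lam : Fin N → ℕ) : F :=
  Matrix.det (Matrix.of fun i j : Fin N =>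
    if (i : ℕ) ≤ lam i + (j : ℕ) then hfun x (lam i + (j : ℕ) - (i : ℕ)) else 0)

/-- The hook partition `μ(M,N,j) = (M-N+1, 1^{N-j-1}, 0^j)`. -/
def hookP (M N j : ℕ) : Fin N → ℕ :=
  fun i => if (i : ℕ) = 0 then M - N + 1 else if (i : ℕ) < N - j then 1 else 0

/-- Vandermonde determinant `Δ_N(x) = ∏_{i<j} (x_i - x_j)`. -/
def vdm {F : Type*} [CommRing F] {N : ℕ} (x : Fin N → F) : F :=
  ∏ i : Fin N, ∏ j ∈ Finset.Ioi i, (x i - x j)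

section Aux

open Finset

variable {F : Type*} [CommRing F] {N N' : ℕ}

/-- Reversed Vandermonde determinant `∏_{i<j} (x_j - x_i)`. -/
def rvdm (x : Fin N → F) : F :=
  ∏ i : Fin N, ∏ j ∈ Finset.Ioi i, (x j - x i)

/-- Elementary symmetric polynomial of degree `r` in all variables except `x j`. -/
def esub (x : Fin N → F) (j : Fin N) (r : ℕ) : F :=
  ∑ S ∈ (Finset.univ.erase j).powersetCard r, ∏ i ∈ S, x i

/-- `h_{p-r}`, truncated to `0` when `r > p`. -/
def hh (x : Fin N → F) (p r : ℕ) : F := if r ≤ p then hfun x (p - r) else 0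

/-- The matrix `E` with `E r j = (-1)^r e_r^{(j)}`. -/
def Emat (x : Fin N → F) : Matrix (Fin N) (Fin N) F :=
  Matrix.of fun r j => (-1 : F) ^ (r : ℕ) * esub x j r

/-- The `H`-matrix for exponent vector `μ`. -/
def Hmat (x : Fin N → F) (μ : Fin N → ℕ) : Matrix (Fin N) (Fin N) F :=
  Matrix.of fun i r => hh x (μ i) (r : ℕ)

lemma hfun_eq (x : Fin N → F) (k : ℕ) :
    hfun x k = ∑ d ∈ (Fintype.piFinset fun _ : Fin N => Finset.range (k + 1)).filter
      (fun d => ∑ i, d i = k), ∏ i, x i ^ d i := by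
  unfold hfun
  refine Finset.sum_bij' (fun d _ t => (d t : ℕ))
    (fun d hd t => (⟨d t, by
      have h1 : ∑ i, d i = k := (Finset.mem_filter.mp hd).2
      have h2 : d t ≤ ∑ i, d i := Finset.single_le_sum (fun i _ => Nat.zero_le _) (Finset.mem_univ t)
      omega⟩ : Fin (k + 1))) ?_ ?_ ?_ ?_ ?_
  · intro d hd
    have h1 : ∑ i, (d i : ℕ) = k := (Finset.mem_filter.mp hd).2
    refine Finset.mem_filter.mpr ⟨?_, h1⟩
    refine Fintype.mem_piFinset.mpr fun t => Finset.mem_range.mpr ?_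
    exact (d t).isLt
  · intro d hd
    refine Finset.mem_filter.mpr ⟨Finset.mem_univ _, ?_⟩
    simpa using (Finset.mem_filter.mp hd).2
  · intro d hd
    funext t
    exact Fin.ext rfl
  · intro d hd
    funext t
    rfl
  · intro d hd
    rfl

lemma hfun_zero (x : Fin N → F) : hfun x 0 = 1 := by
  rw [hfun_eq]
  have : (Fintype.piFinset fun _ : Fin N => Finset.range 1).filter
      (fun d : Fin N → ℕ => ∑ i, d i = 0) = {fun _ => 0} := by
    ext d
    simp only [Finset.mem_filter, Fintype.mem_piFinset, Finset.mem_range, Nat.lt_one_iff,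
      Finset.mem_singleton, Finset.sum_eq_zero_iff, Finset.mem_univ, true_implies]
    constructor
    · rintro ⟨h, -⟩
      funext i; exact h i
    · rintro rfl
      exact ⟨fun _ => rfl, fun _ => rfl⟩
  rw [this]
  simp


lemma comp_sum (x : Fin N → F) {k p : ℕ} (hkp : k ≤ p) :
    ∑ d ∈ (Fintype.piFinset fun _ : Fin N => Finset.range (p + 1)).filter
      (fun d => ∑ i, d i = k), ∏ i, x i ^ d i = hfun x k := by
  rw [hfun_eq]
  apply Finset.sum_congr _ (fun _ _ => rfl)
  ext d
  simp only [Finset.mem_filter, Fintype.mem_piFinset, Finset.mem_range]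
  constructor
  · rintro ⟨h1, h2⟩
    refine ⟨fun i => ?_, h2⟩
    have := Finset.single_le_sum (f := d) (fun i _ => Nat.zero_le _) (Finset.mem_univ i)
    omega
  · rintro ⟨h1, h2⟩
    refine ⟨fun i => ?_, h2⟩
    have := h1 i
    omega

/-- The support set used for the sign-reversing involution. -/
def TTs (j : Fin N') (q : Finset (Fin N') × (Fin N' → ℕ)) : Finset (Fin N') :=
  (q.1 ∪ Finset.univ.filter fun i => q.2 i ≠ 0).erase j

/-- The pivot index for the involution. -/
def istar (j : Fin N') (q : Finset (Fin N') × (Fin N' → ℕ)) : Fin N' :=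
  if hT : (TTs j q).Nonempty then (TTs j q).max' hT else j

/-- The sign-reversing involution. -/
def ggf (j : Fin N') (q : Finset (Fin N') × (Fin N' → ℕ)) :
    Finset (Fin N') × (Fin N' → ℕ) :=
  if istar j q ∈ q.1 then
    (q.1.erase (istar j q), Function.update q.2 (istar j q) (q.2 (istar j q) + 1))
  else
    (insert (istar j q) q.1, Function.update q.2 (istar j q) (q.2 (istar j q) - 1))

lemma istar_congr (j : Fin N') {q q' : Finset (Fin N') × (Fin N' → ℕ)}
    (h : TTs j q = TTs j q') : istar j q = istar j q' := by
  simp only [istar, h]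

lemma ggf_props (x : Fin N → F) (j : Fin N) (q : Finset (Fin N) × (Fin N → ℕ))
    (hsub : q.1 ⊆ Finset.univ.erase j) (hT : (TTs j q).Nonempty) :
    (ggf j q).1 ⊆ Finset.univ.erase j ∧ TTs j (ggf j q) = TTs j q ∧
    ggf j (ggf j q) = q ∧ ggf j q ≠ q ∧
    (ggf j q).1.card + ∑ i, (ggf j q).2 i = q.1.card + ∑ i, q.2 i ∧
    ((-1 : F) ^ (ggf j q).1.card * ((∏ i ∈ (ggf j q).1, x i) * ∏ i, x i ^ (ggf j q).2 i)
      = -((-1 : F) ^ q.1.card * ((∏ i ∈ q.1, x i) * ∏ i, x i ^ q.2 i))) := by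
  classical
  have haT : istar j q ∈ TTs j q := by
    rw [istar, dif_pos hT]
    exact Finset.max'_mem _ _
  rw [TTs, Finset.mem_erase, Finset.mem_union, Finset.mem_filter] at haT
  obtain ⟨haj, haor⟩ := haT
  by_cases hc : istar j q ∈ q.1
  · -- move the pivot out of the set, into the exponent vector
    have hg : ggf j q = (q.1.erase (istar j q),
        Function.update q.2 (istar j q) (q.2 (istar j q) + 1)) := by
      rw [ggf, if_pos hc]
    have hcard : 1 ≤ q.1.card := Finset.card_pos.mpr ⟨_, hc⟩
    have hTT : TTs j (ggf j q) = TTs j q := by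
      rw [hg]
      unfold TTs
      ext i
      by_cases hia : i = istar j q
      · subst hia
        simp [Finset.mem_erase, Finset.mem_union, Finset.mem_filter, Function.update_self,
          haj, hc]
      · simp [Finset.mem_erase, Finset.mem_union, Finset.mem_filter,
          Function.update_of_ne hia, hia]
    have hanew : istar j (ggf j q) = istar j q := istar_congr j hTT
    have hinv : ggf j (ggf j q) = q := by
      have hc2 : istar j (ggf j q) ∉ (ggf j q).1 := by
        rw [hanew, hg]
        exact Finset.notMem_erase _ _
      rw [ggf, if_neg hc2, hanew, hg]
      simp only [Function.update_self, Nat.add_sub_cancel, Function.update_idem,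
        Function.update_eq_self, Finset.insert_erase hc]
    have hne : ggf j q ≠ q := by
      rw [hg]
      intro h
      have := congrArg Prod.fst h
      simp only at this
      exact absurd (this ▸ Finset.notMem_erase (istar j q) q.1) (by simpa using hc)
    have hsub' : (ggf j q).1 ⊆ Finset.univ.erase j := by
      rw [hg]
      exact (Finset.erase_subset _ _).trans hsub
    have hkeysum : ∀ g : Fin N → ℕ, ∑ i, g i
        = g (istar j q) + ∑ i ∈ Finset.univ.erase (istar j q), g i :=
      fun g => (Finset.add_sum_erase _ g (Finset.mem_univ _)).symm
    have hkeyprod : ∀ g : Fin N → ℕ, ∏ i, x i ^ g i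
        = x (istar j q) ^ g (istar j q) * ∏ i ∈ Finset.univ.erase (istar j q), x i ^ g i :=
      fun g => (Finset.mul_prod_erase _ (fun i => x i ^ g i) (Finset.mem_univ _)).symm
    have herase_s : ∑ i ∈ Finset.univ.erase (istar j q),
        Function.update q.2 (istar j q) (q.2 (istar j q) + 1) i
        = ∑ i ∈ Finset.univ.erase (istar j q), q.2 i :=
      Finset.sum_congr rfl fun i hi => by rw [Function.update_of_ne (Finset.mem_erase.mp hi).1]
    have herase_p : ∏ i ∈ Finset.univ.erase (istar j q),
        x i ^ Function.update q.2 (istar j q) (q.2 (istar j q) + 1) i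
        = ∏ i ∈ Finset.univ.erase (istar j q), x i ^ q.2 i :=
      Finset.prod_congr rfl fun i hi => by rw [Function.update_of_ne (Finset.mem_erase.mp hi).1]
    have hsum_upd : ∑ i, Function.update q.2 (istar j q) (q.2 (istar j q) + 1) i
        = (∑ i, q.2 i) + 1 := by
      rw [hkeysum (Function.update q.2 (istar j q) (q.2 (istar j q) + 1)), hkeysum q.2,
        Function.update_self, herase_s]
      omega
    have hcount : (ggf j q).1.card + ∑ i, (ggf j q).2 i = q.1.card + ∑ i, q.2 i := by
      rw [hg]
      simp only
      rw [Finset.card_erase_of_mem hc, hsum_upd]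
      omega
    refine ⟨hsub', hTT, hinv, hne, hcount, ?_⟩
    rw [hg]
    simp only
    have hprod1 : ∏ i ∈ q.1, x i = x (istar j q) * ∏ i ∈ q.1.erase (istar j q), x i :=
      (Finset.mul_prod_erase q.1 x hc).symm
    have hprod2 : ∏ i, x i ^ Function.update q.2 (istar j q) (q.2 (istar j q) + 1) i
        = x (istar j q) * ∏ i, x i ^ q.2 i := by
      rw [hkeyprod (Function.update q.2 (istar j q) (q.2 (istar j q) + 1)), hkeyprod q.2,
        Function.update_self, herase_p, pow_succ]
      ring
    have hcard' : q.1.card = (q.1.erase (istar j q)).card + 1 := by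
      rw [Finset.card_erase_of_mem hc]
      omega
    rw [hprod2, hprod1, hcard', pow_succ]
    ring
  · -- move the pivot into the set, out of the exponent vector
    have hd : q.2 (istar j q) ≠ 0 := by
      rcases haor with h | h
      · exact absurd h hc
      · exact h.2
    have hg : ggf j q = (insert (istar j q) q.1,
        Function.update q.2 (istar j q) (q.2 (istar j q) - 1)) := by
      rw [ggf, if_neg hc]
    have hTT : TTs j (ggf j q) = TTs j q := by
      rw [hg]
      unfold TTs
      ext i
      by_cases hia : i = istar j q
      · subst hia
        simp [Finset.mem_erase, Finset.mem_union, Finset.mem_filter, haj, hd]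
      · simp [Finset.mem_erase, Finset.mem_union, Finset.mem_filter,
          Function.update_of_ne hia, hia]
    have hanew : istar j (ggf j q) = istar j q := istar_congr j hTT
    have hinv : ggf j (ggf j q) = q := by
      have hc2 : istar j (ggf j q) ∈ (ggf j q).1 := by
        rw [hanew, hg]
        exact Finset.mem_insert_self _ _
      rw [ggf, if_pos hc2, hanew, hg]
      simp only [Function.update_self, Function.update_idem]
      rw [Finset.erase_insert hc, Nat.sub_add_cancel (Nat.one_le_iff_ne_zero.mpr hd),
        Function.update_eq_self]
    have hne : ggf j q ≠ q := by
      rw [hg]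
      intro h
      have := congrArg Prod.fst h
      simp only at this
      exact hc (this ▸ Finset.mem_insert_self _ _)
    have hsub' : (ggf j q).1 ⊆ Finset.univ.erase j := by
      rw [hg]
      exact Finset.insert_subset (Finset.mem_erase.mpr ⟨haj, Finset.mem_univ _⟩) hsub
    have hsum_le : q.2 (istar j q) ≤ ∑ i, q.2 i :=
      Finset.single_le_sum (fun i _ => Nat.zero_le _) (Finset.mem_univ _)
    have hkeysum : ∀ g : Fin N → ℕ, ∑ i, g i
        = g (istar j q) + ∑ i ∈ Finset.univ.erase (istar j q), g i :=
      fun g => (Finset.add_sum_erase _ g (Finset.mem_univ _)).symm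
    have hkeyprod : ∀ g : Fin N → ℕ, ∏ i, x i ^ g i
        = x (istar j q) ^ g (istar j q) * ∏ i ∈ Finset.univ.erase (istar j q), x i ^ g i :=
      fun g => (Finset.mul_prod_erase _ (fun i => x i ^ g i) (Finset.mem_univ _)).symm
    have herase_s : ∑ i ∈ Finset.univ.erase (istar j q),
        Function.update q.2 (istar j q) (q.2 (istar j q) - 1) i
        = ∑ i ∈ Finset.univ.erase (istar j q), q.2 i :=
      Finset.sum_congr rfl fun i hi => by rw [Function.update_of_ne (Finset.mem_erase.mp hi).1]
    have herase_p : ∏ i ∈ Finset.univ.erase (istar j q),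
        x i ^ Function.update q.2 (istar j q) (q.2 (istar j q) - 1) i
        = ∏ i ∈ Finset.univ.erase (istar j q), x i ^ q.2 i :=
      Finset.prod_congr rfl fun i hi => by rw [Function.update_of_ne (Finset.mem_erase.mp hi).1]
    have hsum_upd : ∑ i, Function.update q.2 (istar j q) (q.2 (istar j q) - 1) i
        = (∑ i, q.2 i) - 1 := by
      rw [hkeysum (Function.update q.2 (istar j q) (q.2 (istar j q) - 1)), hkeysum q.2,
        Function.update_self, herase_s]
      omega
    have hcount : (ggf j q).1.card + ∑ i, (ggf j q).2 i = q.1.card + ∑ i, q.2 i := by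
      rw [hg]
      simp only
      rw [Finset.card_insert_of_notMem hc, hsum_upd]
      omega
    refine ⟨hsub', hTT, hinv, hne, hcount, ?_⟩
    rw [hg]
    simp only
    have hprod1 : ∏ i ∈ insert (istar j q) q.1, x i = x (istar j q) * ∏ i ∈ q.1, x i :=
      Finset.prod_insert hc
    have hprod2 : ∏ i, x i ^ q.2 i
        = x (istar j q) * ∏ i, x i ^ Function.update q.2 (istar j q) (q.2 (istar j q) - 1) i := by
      rw [hkeyprod q.2, hkeyprod (Function.update q.2 (istar j q) (q.2 (istar j q) - 1)),
        Function.update_self, herase_p]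
      conv_lhs => rw [show q.2 (istar j q) = (q.2 (istar j q) - 1) + 1 by omega]
      rw [pow_succ]
      ring
    rw [hprod1, hprod2, Finset.card_insert_of_notMem hc, pow_succ]
    ring

/-- Key identity : `x_j^p = ∑_r h_{p-r} (-1)^r e_r^{(j)}`. -/
lemma TTs_q0 (j : Fin N') (p : ℕ) :
    TTs j ((∅ : Finset (Fin N')), fun i => if i = j then p else 0) = ∅ := by
  unfold TTs
  ext i
  simp only [Finset.mem_erase, Finset.mem_union, Finset.mem_filter, Finset.mem_univ, true_and,
    Finset.notMem_empty, iff_false, not_and, Finset.empty_union]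
  intro hij
  simp [hij]

lemma key_identity (x : Fin N → F) (j : Fin N) (p : ℕ) :
    x j ^ p = ∑ r : Fin N, hh x p r * ((-1 : F) ^ (r : ℕ) * esub x j r) := by
  classical
  have hN : 0 < N := j.pos
  set P : Finset (Finset (Fin N) × (Fin N → ℕ)) :=
    ((Finset.univ.erase j).powerset ×ˢ Fintype.piFinset fun _ : Fin N => Finset.range (p + 1)).filter
      (fun q => q.1.card + ∑ i, q.2 i = p) with hPdef
  have memP : ∀ q : Finset (Fin N) × (Fin N → ℕ), q ∈ P ↔
      (q.1 ⊆ Finset.univ.erase j ∧ (∀ i, q.2 i < p + 1) ∧ q.1.card + ∑ i, q.2 i = p) := by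
    intro q
    rw [hPdef, Finset.mem_filter, Finset.mem_product, Finset.mem_powerset,
      Fintype.mem_piFinset]
    simp only [Finset.mem_range]
    tauto
  -- Claim A : the sum over P equals the right hand side
  have claimA : ∑ q ∈ P, ((-1 : F) ^ q.1.card * ((∏ i ∈ q.1, x i) * ∏ i, x i ^ q.2 i))
      = ∑ r : Fin N, hh x p r * ((-1 : F) ^ (r : ℕ) * esub x j r) := by
    rw [hPdef, Finset.sum_filter, Finset.sum_product, Finset.sum_powerset]
    have hcard : (Finset.univ.erase j).card = N - 1 := by
      rw [Finset.card_erase_of_mem (Finset.mem_univ j), Finset.card_univ, Fintype.card_fin]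
    rw [hcard, show N - 1 + 1 = N by omega, ← Fin.sum_univ_eq_sum_range]
    refine Finset.sum_congr rfl fun r _ => ?_
    rw [hh, esub]
    by_cases hrp : (r : ℕ) ≤ p
    · rw [if_pos hrp, Finset.mul_sum, Finset.mul_sum]
      refine Finset.sum_congr rfl fun S hS => ?_
      have hScard : S.card = (r : ℕ) := (Finset.mem_powersetCard.mp hS).2
      have hcond : ∀ d : Fin N → ℕ, (S.card + ∑ i, d i = p) ↔ (∑ i, d i = p - (r : ℕ)) := by
        intro d
        rw [hScard]
        omega
      calc (∑ d ∈ Fintype.piFinset fun _ : Fin N => Finset.range (p + 1),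
              if S.card + ∑ i, d i = p then
                (-1 : F) ^ S.card * ((∏ i ∈ S, x i) * ∏ i, x i ^ d i) else 0)
          = ∑ d ∈ Fintype.piFinset fun _ : Fin N => Finset.range (p + 1),
              if ∑ i, d i = p - (r : ℕ) then
                (-1 : F) ^ S.card * ((∏ i ∈ S, x i) * ∏ i, x i ^ d i) else 0 :=
            Finset.sum_congr rfl fun d _ => if_congr (hcond d) rfl rfl
        _ = ∑ d ∈ (Fintype.piFinset fun _ : Fin N => Finset.range (p + 1)).filter
              (fun d => ∑ i, d i = p - (r : ℕ)),
              (-1 : F) ^ S.card * ((∏ i ∈ S, x i) * ∏ i, x i ^ d i) :=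
            (Finset.sum_filter _ _).symm
        _ = (-1 : F) ^ S.card * ((∏ i ∈ S, x i) *
              ∑ d ∈ (Fintype.piFinset fun _ : Fin N => Finset.range (p + 1)).filter
                (fun d => ∑ i, d i = p - (r : ℕ)), ∏ i, x i ^ d i) := by
            rw [Finset.mul_sum, Finset.mul_sum]
        _ = hfun x (p - (r : ℕ)) * ((-1 : F) ^ (r : ℕ) * ∏ i ∈ S, x i) := by
            rw [comp_sum x (by omega : p - (r : ℕ) ≤ p), hScard]
            ring
    · rw [if_neg hrp, zero_mul]
      refine Finset.sum_eq_zero fun S hS => Finset.sum_eq_zero fun d _ => ?_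
      have hScard : S.card = (r : ℕ) := (Finset.mem_powersetCard.mp hS).2
      have hne : ¬(S.card + ∑ i, d i = p) := by omega
      exact if_neg hne
  -- Claim B : the sum over P equals `x j ^ p`
  have hq0 : ((∅ : Finset (Fin N)), fun i => if i = j then p else 0) ∈ P := by
    rw [memP]
    refine ⟨Finset.empty_subset _, fun i => ?_, ?_⟩
    · show (if i = j then p else 0) < p + 1
      split <;> omega
    · show (∅ : Finset (Fin N)).card + ∑ i, (if i = j then p else 0) = p
      simp
  have claimB : ∑ q ∈ P, ((-1 : F) ^ q.1.card * ((∏ i ∈ q.1, x i) * ∏ i, x i ^ q.2 i))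
      = x j ^ p := by
    rw [← Finset.add_sum_erase _ _ hq0]
    have h1 : (-1 : F) ^ (∅ : Finset (Fin N)).card *
        ((∏ i ∈ (∅ : Finset (Fin N)), x i) * ∏ i, x i ^ (if i = j then p else 0)) = x j ^ p := by
      rw [Finset.prod_eq_single j (fun b _ hb => by rw [if_neg hb, pow_zero])
        (fun h => absurd (Finset.mem_univ j) h), if_pos rfl]
      simp
    rw [h1]
    have hzero : ∑ q ∈ P.erase ((∅ : Finset (Fin N)), fun i => if i = j then p else 0),
        ((-1 : F) ^ q.1.card * ((∏ i ∈ q.1, x i) * ∏ i, x i ^ q.2 i)) = 0 := by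
      have master : ∀ q ∈ P.erase ((∅ : Finset (Fin N)), fun i => if i = j then p else 0),
          ggf j q ∈ P.erase ((∅ : Finset (Fin N)), fun i => if i = j then p else 0) ∧
          ggf j (ggf j q) = q ∧ ggf j q ≠ q ∧
          ((-1 : F) ^ q.1.card * ((∏ i ∈ q.1, x i) * ∏ i, x i ^ q.2 i) +
            (-1 : F) ^ (ggf j q).1.card *
              ((∏ i ∈ (ggf j q).1, x i) * ∏ i, x i ^ (ggf j q).2 i) = 0) := by
        intro q hq
        obtain ⟨hqne, hqP⟩ := Finset.mem_erase.mp hq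
        rw [memP] at hqP
        obtain ⟨hsub, hpi, hsum⟩ := hqP
        have hT : (TTs j q).Nonempty := by
          rw [Finset.nonempty_iff_ne_empty]
          intro hTe
          apply hqne
          have h1 : q.1 = ∅ := by
            refine Finset.eq_empty_of_forall_notMem fun i hi => ?_
            have hij : i ≠ j := (Finset.mem_erase.mp (hsub hi)).1
            have : i ∈ TTs j q := by
              rw [TTs, Finset.mem_erase, Finset.mem_union]
              exact ⟨hij, Or.inl hi⟩
            rw [hTe] at this
            exact absurd this (Finset.notMem_empty i)
          have h2 : ∀ i, i ≠ j → q.2 i = 0 := by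
            intro i hij
            by_contra hne
            have : i ∈ TTs j q := by
              rw [TTs, Finset.mem_erase, Finset.mem_union, Finset.mem_filter]
              exact ⟨hij, Or.inr ⟨Finset.mem_univ i, hne⟩⟩
            rw [hTe] at this
            exact absurd this (Finset.notMem_empty i)
          have h3 : ∑ i, q.2 i = q.2 j :=
            Finset.sum_eq_single j (fun b _ hb => h2 b hb)
              (fun h => absurd (Finset.mem_univ j) h)
          have h4 : q.2 j = p := by
            rw [h1] at hsum
            simp only [Finset.card_empty, zero_add] at hsum
            omega
          refine Prod.ext h1 (funext fun i => ?_)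
          by_cases hij : i = j
          · subst hij
            simp [h4]
          · simp [hij, h2 i hij]
        obtain ⟨gsub, gTT, ginv, gne, gcount, gcancel⟩ := ggf_props x j q hsub hT
        refine ⟨?_, ginv, gne, by rw [gcancel]; ring⟩
        refine Finset.mem_erase.mpr ⟨?_, ?_⟩
        · intro hgq
          have h5 : TTs j (ggf j q) = ∅ := by rw [hgq, TTs_q0]
          rw [gTT] at h5
          exact absurd h5 (Finset.nonempty_iff_ne_empty.mp hT)
        · rw [memP]
          refine ⟨gsub, fun i => ?_, by omega⟩
          have hle : (ggf j q).2 i ≤ ∑ i', (ggf j q).2 i' :=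
            Finset.single_le_sum (fun i' _ => Nat.zero_le _) (Finset.mem_univ i)
          omega
      exact Finset.sum_involution (fun q _ => ggf j q)
        (fun q hq => (master q hq).2.2.2)
        (fun q hq _ => (master q hq).2.2.1)
        (fun q hq => (master q hq).1)
        (fun q hq => (master q hq).2.1)
    rw [hzero, add_zero]
  rw [← claimA, claimB]

lemma factorizationHE (x : Fin N → F) (μ : Fin N → ℕ) :
    (Matrix.of fun i j : Fin N => x j ^ μ i) = Hmat x μ * Emat x := by
  ext i j
  simp only [Matrix.of_apply, Matrix.mul_apply, Hmat, Emat, Matrix.of_apply]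
  exact key_identity x j (μ i)

lemma sign_sq (σ : Equiv.Perm (Fin N)) :
    (((Equiv.Perm.sign σ : ℤ) : F)) * (((Equiv.Perm.sign σ : ℤ) : F)) = 1 := by
  rw [← Int.cast_mul, ← Units.val_mul, Int.units_mul_self, Units.val_one, Int.cast_one]

lemma val_rev' (i : Fin N) : ((Fin.rev i : Fin N) : ℕ) = N - 1 - (i : ℕ) := by
  rw [Fin.val_rev]
  omega

lemma det_Emat (x : Fin N → F) : (Emat x).det = rvdm x := by
  have hfact := congrArg Matrix.det (factorizationHE x (fun i => N - 1 - (i : ℕ)))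
  rw [Matrix.det_mul] at hfact
  set ε : F := (((Equiv.Perm.sign (Fin.revPerm : Equiv.Perm (Fin N))) : ℤ) : F) with hε
  have hε2 : ε * ε = 1 := sign_sq _
  have hA : (Matrix.of fun i j : Fin N => x j ^ (N - 1 - (i : ℕ))).det = ε * rvdm x := by
    have h1 : (Matrix.of fun i j : Fin N => x j ^ (N - 1 - (i : ℕ)))
        = (Matrix.of fun i j : Fin N => x j ^ (i : ℕ)).submatrix Fin.revPerm id := by
      ext i j
      simp only [Matrix.of_apply, Matrix.submatrix_apply, id_eq, Fin.revPerm_apply]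
      rw [val_rev']
    have h2 : (Matrix.of fun i j : Fin N => x j ^ (i : ℕ)) = (Matrix.vandermonde x)ᵀ := by
      ext i j
      simp [Matrix.vandermonde]
    rw [h1, Matrix.det_permute, h2, Matrix.det_transpose, Matrix.det_vandermonde]
    rfl
  have hH : (Hmat x (fun i => N - 1 - (i : ℕ))).det = ε := by
    have h3 := Matrix.det_permute' (Fin.revPerm : Equiv.Perm (Fin N))
      (Hmat x (fun i => N - 1 - (i : ℕ)))
    have h4 : ((Hmat x (fun i => N - 1 - (i : ℕ))).submatrix id Fin.revPerm).det = 1 := by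
      have hut : ((Hmat x (fun i => N - 1 - (i : ℕ))).submatrix id Fin.revPerm).BlockTriangular
          id := by
        intro i j hji
        have hi := i.isLt
        have hj := j.isLt
        have hji' : (j : ℕ) < (i : ℕ) := hji
        simp only [Matrix.submatrix_apply, Hmat, Matrix.of_apply, id_eq, Fin.revPerm_apply]
        rw [val_rev', hh, if_neg (by omega)]
      rw [Matrix.det_of_upperTriangular hut]
      refine Finset.prod_eq_one fun i _ => ?_
      have hi := i.isLt
      simp only [Matrix.submatrix_apply, Hmat, Matrix.of_apply, id_eq, Fin.revPerm_apply]
      rw [val_rev', hh, if_pos (le_refl _), Nat.sub_self, hfun_zero]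
    rw [h4, ← hε] at h3
    calc (Hmat x (fun i => N - 1 - (i : ℕ))).det
        = (ε * ε) * (Hmat x (fun i => N - 1 - (i : ℕ))).det := by rw [hε2, one_mul]
      _ = ε * (ε * (Hmat x (fun i => N - 1 - (i : ℕ))).det) := by ring
      _ = ε := by rw [← h3, mul_one]
  rw [hA, hH] at hfact
  calc (Emat x).det = (ε * ε) * (Emat x).det := by rw [hε2, one_mul]
    _ = ε * (ε * (Emat x).det) := by ring
    _ = ε * (ε * rvdm x) := by rw [← hfact]
    _ = rvdm x := by rw [← mul_assoc, hε2, one_mul]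

lemma det_gen_vandermonde (x : Fin N → F) (lam : Fin N → ℕ) :
    (Matrix.of fun i j : Fin N => x j ^ (lam (Fin.rev i) + (i : ℕ))).det =
      schurAt x lam * rvdm x := by
  set ε : F := (((Equiv.Perm.sign (Fin.revPerm : Equiv.Perm (Fin N))) : ℤ) : F) with hε
  have hε2 : ε * ε = 1 := sign_sq _
  set μ : Fin N → ℕ := fun i => lam i + (N - 1 - (i : ℕ)) with hμ
  have h1 : (Matrix.of fun i j : Fin N => x j ^ (lam (Fin.rev i) + (i : ℕ)))
      = (Matrix.of fun i j : Fin N => x j ^ μ i).submatrix Fin.revPerm id := by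
    ext i j
    have hi := i.isLt
    simp only [Matrix.of_apply, Matrix.submatrix_apply, id_eq, Fin.revPerm_apply, hμ]
    congr 1
    rw [val_rev']
    have := val_rev' i
    omega
  have hschur : schurAt x lam = ε * (Hmat x μ).det := by
    have h2 : (Hmat x μ).submatrix id Fin.revPerm
        = (Matrix.of fun i j : Fin N =>
            if (i : ℕ) ≤ lam i + (j : ℕ) then hfun x (lam i + (j : ℕ) - (i : ℕ)) else 0) := by
      ext i j
      have hi := i.isLt
      have hj := j.isLt
      simp only [Matrix.submatrix_apply, Hmat, Matrix.of_apply, id_eq, Fin.revPerm_apply, hμ]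
      rw [val_rev', hh]
      by_cases h : (i : ℕ) ≤ lam i + (j : ℕ)
      · rw [if_pos (by omega), if_pos h]
        congr 1
        omega
      · rw [if_neg (by omega), if_neg h]
    have h3 := Matrix.det_permute' (Fin.revPerm : Equiv.Perm (Fin N)) (Hmat x μ)
    rw [h2] at h3
    rw [schurAt, ← h3]
  rw [h1, Matrix.det_permute, congrArg Matrix.det (factorizationHE x μ), Matrix.det_mul,
    det_Emat, ← hε]
  rw [hschur]
  ring

lemma cauchy_binet {m : ℕ} (j₀ : Fin m) (B : Matrix (Fin N) (Fin m) F)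
    (C : Matrix (Fin m) (Fin N) F) :
    (B * C).det = ∑ s ∈ (Finset.univ : Finset (Fin m)).powersetCard N,
      (B.submatrix id (fun i : Fin N => (s.sort (· ≤ ·)).getD i j₀)).det *
      (C.submatrix (fun i : Fin N => (s.sort (· ≤ ·)).getD i j₀) id).det := by
  classical
  have step1 : (B * C).det
      = ∑ f : Fin N → Fin m, (∏ i, B i (f i)) * (C.submatrix f id).det := by
    calc (B * C).det
        = Matrix.detRowAlternating (fun i => ∑ j : Fin m, B i j • C j) := by
          show Matrix.detRowAlternating (B * C) = _
          congr 1
          funext i k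
          simp [Matrix.mul_apply, Finset.sum_apply]
      _ = ∑ f : Fin N → Fin m, Matrix.detRowAlternating (fun i => B i (f i) • C (f i)) :=
          (Matrix.detRowAlternating :
            (Fin N → F) [⋀^Fin N]→ₗ[F] F).toMultilinearMap.map_sum
            (g := fun i j => B i j • C j)
      _ = ∑ f : Fin N → Fin m, (∏ i, B i (f i)) * (C.submatrix f id).det := by
          refine Finset.sum_congr rfl fun f _ => ?_
          have := (Matrix.detRowAlternating :
            (Fin N → F) [⋀^Fin N]→ₗ[F] F).toMultilinearMap.map_smul_univ
            (fun i => B i (f i)) (fun i => C (f i))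
          exact this.trans (by rw [smul_eq_mul]; rfl)
  have step2 : ∑ f : Fin N → Fin m, (∏ i, B i (f i)) * (C.submatrix f id).det
      = ∑ f ∈ Finset.univ.filter (fun f : Fin N → Fin m => Function.Injective f),
          (∏ i, B i (f i)) * (C.submatrix f id).det := by
    symm
    apply Finset.sum_subset (Finset.filter_subset _ _)
    intro f _ hf
    rw [Finset.mem_filter] at hf
    have hninj : ¬ Function.Injective f := fun h => hf ⟨Finset.mem_univ f, h⟩
    rw [Function.not_injective_iff] at hninj
    obtain ⟨a, b, hab, hne⟩ := hninj
    have hz : (C.submatrix f id).det = 0 :=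
      Matrix.det_zero_of_row_eq hne (by funext k; simp [Matrix.submatrix_apply, hab])
    rw [hz, mul_zero]
  have hmaps : ∀ f ∈ Finset.univ.filter (fun f : Fin N → Fin m => Function.Injective f),
      Finset.univ.image f ∈ (Finset.univ : Finset (Fin m)).powersetCard N := by
    intro f hf
    rw [Finset.mem_filter] at hf
    rw [Finset.mem_powersetCard]
    exact ⟨Finset.subset_univ _, by
      rw [Finset.card_image_of_injective _ hf.2, Finset.card_univ, Fintype.card_fin]⟩
  rw [step1, step2, ← Finset.sum_fiberwise_of_maps_to hmaps]
  refine Finset.sum_congr rfl fun s hs => ?_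
  have hcard : s.card = N := (Finset.mem_powersetCard.mp hs).2
  have hgetD : (fun i : Fin N => (s.sort (· ≤ ·)).getD i j₀)
      = fun i : Fin N => s.orderEmbOfFin hcard i := by
    funext i
    have hlen : (i : ℕ) < (s.sort (· ≤ ·)).length := by
      rw [Finset.length_sort, hcard]
      exact i.isLt
    rw [List.getD_eq_getElem _ _ hlen]
    exact (Finset.orderEmbOfFin_apply s hcard i).symm
  rw [hgetD]
  set e : Fin N → Fin m := fun i => s.orderEmbOfFin hcard i with he
  have heinj : Function.Injective e := fun a b hab => (s.orderEmbOfFin hcard).injective hab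
  have hemem : ∀ i, e i ∈ s := fun i => Finset.orderEmbOfFin_mem s hcard i
  have hesurj : ∀ k ∈ s, ∃ i, e i = k := by
    intro k hk
    refine ⟨(s.orderIsoOfFin hcard).symm ⟨k, hk⟩, ?_⟩
    have h1 := Finset.coe_orderIsoOfFin_apply s hcard ((s.orderIsoOfFin hcard).symm ⟨k, hk⟩)
    rw [OrderIso.apply_symm_apply] at h1
    exact h1.symm
  have hperm : ∑ f ∈ (Finset.univ.filter fun f : Fin N → Fin m =>
        Function.Injective f).filter (fun f => Finset.univ.image f = s),
        (∏ i, B i (f i)) * (C.submatrix f id).det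
      = ∑ σ : Equiv.Perm (Fin N),
          (∏ i, B i (e (σ i))) * (C.submatrix (fun i => e (σ i)) id).det := by
    symm
    refine Finset.sum_bij (fun σ _ => fun i => e (σ i)) ?_ ?_ ?_ ?_
    · intro σ _
      simp only [Finset.mem_filter, Finset.mem_univ, true_and]
      refine ⟨heinj.comp σ.injective, ?_⟩
      ext k
      simp only [Finset.mem_image, Finset.mem_univ, true_and]
      constructor
      · rintro ⟨i, rfl⟩
        exact hemem (σ i)
      · intro hk
        obtain ⟨i, hi⟩ := hesurj k hk
        exact ⟨σ.symm i, by rw [Equiv.apply_symm_apply, hi]⟩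
    · intro σ1 _ σ2 _ h
      ext i
      have := congrFun h i
      exact congrArg Fin.val (heinj this)
    · intro f hf
      simp only [Finset.mem_filter, Finset.mem_univ, true_and] at hf
      obtain ⟨hinj, himg⟩ := hf
      have hmem : ∀ i, f i ∈ s := fun i => himg ▸ Finset.mem_image_of_mem f (Finset.mem_univ i)
      have hgbij : Function.Bijective (fun i => (⟨f i, hmem i⟩ : {y // y ∈ s})) := by
        rw [Fintype.bijective_iff_injective_and_card]
        constructor
        · intro a b hab
          exact hinj (congrArg Subtype.val hab)
        · rw [Fintype.card_coe, hcard, Fintype.card_fin]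
      refine ⟨(Equiv.ofBijective _ hgbij).trans (s.orderIsoOfFin hcard).toEquiv.symm,
        Finset.mem_univ _, ?_⟩
      funext i
      show e ((s.orderIsoOfFin hcard).toEquiv.symm (Equiv.ofBijective _ hgbij i)) = f i
      have h1 := Finset.coe_orderIsoOfFin_apply s hcard
        ((s.orderIsoOfFin hcard).toEquiv.symm (Equiv.ofBijective _ hgbij i))
      rw [show (s.orderIsoOfFin hcard) ((s.orderIsoOfFin hcard).toEquiv.symm
        (Equiv.ofBijective _ hgbij i)) = Equiv.ofBijective _ hgbij i from
        OrderIso.apply_symm_apply _ _] at h1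
      exact h1.symm
    · intro σ _
      rfl
  rw [hperm]
  have hdetC : ∀ σ : Equiv.Perm (Fin N), (C.submatrix (fun i => e (σ i)) id).det
      = ((Equiv.Perm.sign σ : ℤ) : F) * (C.submatrix e id).det := by
    intro σ
    have h1 : C.submatrix (fun i => e (σ i)) id = (C.submatrix e id).submatrix σ id := rfl
    rw [h1, Matrix.det_permute]
  have hdetB : (B.submatrix id e).det
      = ∑ σ : Equiv.Perm (Fin N), ((Equiv.Perm.sign σ : ℤ) : F) * ∏ i, B i (e (σ i)) := by
    rw [← Matrix.det_transpose, Matrix.det_apply']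
    refine Finset.sum_congr rfl fun σ _ => ?_
    congr 1
  calc ∑ σ : Equiv.Perm (Fin N),
        (∏ i, B i (e (σ i))) * (C.submatrix (fun i => e (σ i)) id).det
      = ∑ σ : Equiv.Perm (Fin N),
          (((Equiv.Perm.sign σ : ℤ) : F) * ∏ i, B i (e (σ i))) * (C.submatrix e id).det := by
        refine Finset.sum_congr rfl fun σ _ => ?_
        rw [hdetC σ]
        ring
    _ = (B.submatrix id e).det * (C.submatrix e id).det := by
        rw [hdetB, ← Finset.sum_mul]

lemma rvdm_eq (x : Fin N → F) :
    rvdm x = (∏ i : Fin N, ∏ _j ∈ Finset.Ioi i, (-1 : F)) * vdm x := by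
  rw [rvdm, vdm, ← Finset.prod_mul_distrib]
  refine Finset.prod_congr rfl fun i _ => ?_
  rw [← Finset.prod_mul_distrib]
  refine Finset.prod_congr rfl fun j _ => by ring

lemma rvdm_mul_rvdm (x y : Fin N → F) : rvdm x * rvdm y = vdm x * vdm y := by
  rw [rvdm_eq x, rvdm_eq y]
  have hz : (∏ i : Fin N, ∏ _j ∈ Finset.Ioi i, (-1 : F)) *
      (∏ i : Fin N, ∏ _j ∈ Finset.Ioi i, (-1 : F)) = 1 := by
    rw [← Finset.prod_mul_distrib]
    refine Finset.prod_eq_one fun i _ => ?_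
    rw [← Finset.prod_mul_distrib]
    exact Finset.prod_eq_one fun j _ => by ring
  calc (∏ i : Fin N, ∏ _j ∈ Finset.Ioi i, (-1 : F)) * vdm x *
      ((∏ i : Fin N, ∏ _j ∈ Finset.Ioi i, (-1 : F)) * vdm y)
      = ((∏ i : Fin N, ∏ _j ∈ Finset.Ioi i, (-1 : F)) *
        (∏ i : Fin N, ∏ _j ∈ Finset.Ioi i, (-1 : F))) * (vdm x * vdm y) := by ring
    _ = vdm x * vdm y := by rw [hz, one_mul]

end Aux

/-- Cauchy–Binet type expansion of the determinant of a sum of Hadamard powers of a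
rank-one matrix, in terms of Schur polynomials. -/
theorem det_sum_hadamardPowers_rank_one {F : Type*} [Field F] (N m : ℕ) (hN : 1 ≤ N)
    (hm : N ≤ m) (n : Fin m → ℕ) (hn : StrictMono n) (c : Fin m → F) (u v : Fin N → F) :
    Matrix.det (Matrix.of fun i k : Fin N => ∑ j : Fin m, c j * (u i * v k) ^ n j) =
      vdm u * vdm v *
        ∑ s ∈ (Finset.univ : Finset (Fin m)).powersetCard N,
          schurAt u (fun i => ((s.sort (· ≤ ·)).map n).getD (i.rev : ℕ) 0 - (i.rev : ℕ)) *
          schurAt v (fun i => ((s.sort (· ≤ ·)).map n).getD (i.rev : ℕ) 0 - (i.rev : ℕ)) *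
          ∏ j ∈ s, c j := by
  classical
  have hm0 : 0 < m := lt_of_lt_of_le hN hm
  set j₀ : Fin m := ⟨0, hm0⟩ with hj₀
  set B : Matrix (Fin N) (Fin m) F := Matrix.of fun i j => u i ^ n j with hB
  set C : Matrix (Fin m) (Fin N) F := Matrix.of fun j k => c j * v k ^ n j with hC
  have hBC : (Matrix.of fun i k : Fin N => ∑ j : Fin m, c j * (u i * v k) ^ n j) = B * C := by
    ext i k
    simp only [Matrix.of_apply, Matrix.mul_apply, hB, hC]
    refine Finset.sum_congr rfl fun j _ => ?_
    rw [mul_pow]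
    ring
  rw [hBC, cauchy_binet j₀ B C, Finset.mul_sum]
  refine Finset.sum_congr rfl fun s hs => ?_
  have hcard : s.card = N := (Finset.mem_powersetCard.mp hs).2
  set lamS : Fin N → ℕ :=
    fun i => ((s.sort (· ≤ ·)).map n).getD (i.rev : ℕ) 0 - (i.rev : ℕ) with hlamS
  set sel : Fin N → Fin m := fun i => (s.sort (· ≤ ·)).getD i j₀ with hsel
  have hlen : (s.sort (· ≤ ·)).length = N := by rw [Finset.length_sort, hcard]
  have hselval : ∀ i : Fin N, sel i
      = (s.sort (· ≤ ·)).get ⟨(i : ℕ), by rw [hlen]; exact i.isLt⟩ := by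
    intro i
    rw [hsel]
    simp only
    rw [List.getD_eq_getElem _ _ (by rw [hlen]; exact i.isLt), List.get_eq_getElem]
  have hselmono : StrictMono sel := by
    intro a b hab
    rw [hselval a, hselval b]
    exact List.Pairwise.rel_get_of_lt (Finset.sortedLT_sort s).pairwise (by exact hab)
  set ν : Fin N → ℕ := fun i => n (sel i) with hν
  have hνmono : StrictMono ν := fun a b hab => hn (hselmono hab)
  have hν_ge : ∀ i : Fin N, (i : ℕ) ≤ ν i := by
    have key : ∀ k : ℕ, ∀ h : k < N, k ≤ ν ⟨k, h⟩ := by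
      intro k
      induction k with
      | zero => intro h; exact Nat.zero_le _
      | succ k ih =>
        intro h
        have hk : k < N := by omega
        have h1 := ih hk
        have h2 : ν ⟨k, hk⟩ < ν ⟨k + 1, h⟩ := hνmono (by simp [Fin.lt_def])
        omega
    intro i
    have := key (i : ℕ) i.isLt
    simpa using this
  have hlam_eq : ∀ i : Fin N, lamS i = ν (Fin.rev i) - ((Fin.rev i) : ℕ) := by
    intro i
    rw [hlamS]
    simp only
    have hrl : ((Fin.rev i) : ℕ) < ((s.sort (· ≤ ·)).map n).length := by
      rw [List.length_map, hlen]
      exact (Fin.rev i).isLt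
    rw [List.getD_eq_getElem _ _ hrl, List.getElem_map]
    congr 2
    rw [hselval (Fin.rev i), List.get_eq_getElem]
  have hexp : ∀ i : Fin N, lamS (Fin.rev i) + (i : ℕ) = ν i := by
    intro i
    rw [hlam_eq (Fin.rev i), Fin.rev_rev]
    have := hν_ge i
    omega
  -- the B-determinant
  have hdetB : (B.submatrix id sel).det = schurAt u lamS * rvdm u := by
    have h1 : B.submatrix id sel
        = (Matrix.of fun i j : Fin N => u j ^ (lamS (Fin.rev i) + (i : ℕ)))ᵀ := by
      ext i j
      simp only [Matrix.submatrix_apply, Matrix.transpose_apply, Matrix.of_apply, hB, id_eq]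
      rw [hexp j]
    rw [h1, Matrix.det_transpose, det_gen_vandermonde]
  -- the C-determinant
  have hdetC : (C.submatrix sel id).det
      = (∏ j ∈ s, c j) * (schurAt v lamS * rvdm v) := by
    have h1 : C.submatrix sel id
        = Matrix.of fun j k : Fin N =>
            c (sel j) * (Matrix.of fun j' k' : Fin N =>
              v k' ^ (lamS (Fin.rev j') + (j' : ℕ))) j k := by
      ext j k
      simp only [Matrix.submatrix_apply, Matrix.of_apply, hC, id_eq]
      rw [hexp j]
    rw [h1, Matrix.det_mul_column, det_gen_vandermonde]
    congr 1
    refine Finset.prod_bij (fun i _ => sel i) ?_ ?_ ?_ ?_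
    · intro i _
      have : sel i ∈ s.sort (· ≤ ·) := by
        rw [hselval i]
        exact List.get_mem _ _
      exact (Finset.mem_sort _).mp this
    · intro a _ b _ hab
      exact hselmono.injective hab
    · intro b hb
      have : b ∈ s.sort (· ≤ ·) := (Finset.mem_sort _).mpr hb
      rw [List.mem_iff_getElem] at this
      obtain ⟨k, hk, hbk⟩ := this
      refine ⟨⟨k, by rw [← hlen]; exact hk⟩, Finset.mem_univ _, ?_⟩
      show sel ⟨k, by rw [← hlen]; exact hk⟩ = b
      rw [hselval, List.get_eq_getElem]
      exact hbk
    · intro i _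
      rfl
  rw [hdetB, hdetC]
  calc (schurAt u lamS * rvdm u) * ((∏ j ∈ s, c j) * (schurAt v lamS * rvdm v))
      = (rvdm u * rvdm v) * (schurAt u lamS * schurAt v lamS * ∏ j ∈ s, c j) := by ring
    _ = (vdm u * vdm v) * (schurAt u lamS * schurAt v lamS * ∏ j ∈ s, c j) := by
        rw [rvdm_mul_rvdm]
    _ = vdm u * vdm v * (schurAt u lamS * schurAt v lamS * ∏ j ∈ s, c j) := by ring
end

section
/- Let M ≥ N ≥ 1 and let μ(M,N,j) be the hook partition (M-N+1, 1,...,1, 0,...,0) with N-j-1 ones and j zeros, for 0 ≤ j < N. Then the Schur polynomial s_{μ(M,N,j)} evaluated at (1,1,...,1) (N ones) equals binom(M, j) · binom(M-j-1, N-j-1). -/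
open Matrix BigOperators

/-! ### Auxiliary material -/

def sbEquiv2 (N k : ℕ) : {f : Fin N → ℕ // ∑ i, f i = k} ≃ Sym (Fin N) k where
  toFun f := ⟨∑ i : Fin N, Multiset.replicate (f.1 i) i, by
    rw [Multiset.card_sum]
    simpa using f.2⟩
  invFun m := ⟨fun i => m.1.count i, by
    rw [Multiset.sum_count_eq_card (fun a _ => Finset.mem_univ a)]
    exact m.2⟩
  left_inv f := by
    ext i
    simp [Multiset.count_sum', Multiset.count_replicate]
  right_inv m := by
    apply Subtype.ext
    simp only [← Multiset.nsmul_singleton]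
    rw [← Finset.sum_subset (Finset.subset_univ m.1.toFinset) (fun x _ hx => by
      rw [Multiset.count_eq_zero_of_notMem (by simpa using hx), zero_nsmul])]
    exact Multiset.toFinset_sum_count_nsmul_eq m.1

def sbEquiv1 (N k : ℕ) :
    {d : Fin N → Fin (k+1) // ∑ i, ((d i : ℕ)) = k} ≃ {f : Fin N → ℕ // ∑ i, f i = k} where
  toFun d := ⟨fun i => (d.1 i : ℕ), d.2⟩
  invFun f := ⟨fun i => ⟨f.1 i, by
    have h : f.1 i ≤ k :=
      le_trans (Finset.single_le_sum (fun a _ => Nat.zero_le (f.1 a)) (Finset.mem_univ i))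
        (le_of_eq f.2)
    omega⟩, by simpa using f.2⟩
  left_inv d := by ext i; simp
  right_inv f := by ext i; simp

lemma hfun_ones (N k : ℕ) : hfun (fun _ : Fin N => (1:ℚ)) k = ((N + k - 1).choose k : ℚ) := by
  unfold hfun
  simp only [one_pow, Finset.prod_const_one, Finset.sum_const, nsmul_eq_mul, mul_one]
  have hcard : (Finset.univ.filter (fun d : Fin N → Fin (k + 1) => ∑ i, (d i : ℕ) = k)).card
      = (N + k - 1).choose k := by
    rw [← Fintype.card_subtype]
    rw [Fintype.card_congr ((sbEquiv1 N k).trans (sbEquiv2 N k))]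
    rw [Sym.card_sym_eq_choose]
    simp
  rw [hcard]

/-- superproduct of pairwise differences over a finite set of naturals -/
def Dprod (S : Finset ℕ) : ℚ := ∏ s ∈ S, ∏ t ∈ S.filter (· < s), ((s:ℚ) - (t:ℚ))

lemma Dprod_insert {a : ℕ} {S : Finset ℕ} (ha : a ∉ S) :
    Dprod (insert a S) =
      (∏ t ∈ S.filter (· < a), ((a:ℚ) - t)) * (∏ s ∈ S.filter (a < ·), ((s:ℚ) - a)) * Dprod S := by
  unfold Dprod
  rw [Finset.prod_insert ha]
  have h1 : (insert a S).filter (· < a) = S.filter (· < a) := by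
    rw [Finset.filter_insert]; simp
  have h3 : ∏ s ∈ S, ∏ t ∈ (insert a S).filter (· < s), ((s:ℚ) - t)
      = ∏ s ∈ S, ((if a < s then ((s:ℚ) - a) else 1) * ∏ t ∈ S.filter (· < s), ((s:ℚ) - t)) := by
    refine Finset.prod_congr rfl (fun s hs => ?_)
    rw [Finset.filter_insert]
    split_ifs with h
    · rw [Finset.prod_insert (by simp [ha])]
    · rw [one_mul]
  rw [h1, h3, Finset.prod_mul_distrib, ← Finset.prod_filter]
  ring

lemma prod_range_sub_cast {a n : ℕ} (h : n ≤ a) :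
    ∏ t ∈ Finset.range n, ((a:ℚ) - t) = (a.descFactorial n : ℚ) := by
  induction n with
  | zero => simp
  | succ n ih =>
    rw [Finset.prod_range_succ, ih (by omega), Nat.descFactorial_succ]
    push_cast [Nat.cast_sub (by omega : n ≤ a)]
    ring

lemma prod_range_add_one_cast (n : ℕ) :
    ∏ t ∈ Finset.range n, ((t:ℚ) + 1) = (n.factorial : ℚ) := by
  induction n with
  | zero => simp
  | succ n ih => rw [Finset.prod_range_succ, ih]; push_cast [Nat.factorial_succ]; ring

lemma Dprod_range (n : ℕ) : Dprod (Finset.range n) = ∏ k ∈ Finset.range n, (k.factorial : ℚ) := by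
  induction n with
  | zero => simp [Dprod]
  | succ n ih =>
    rw [Finset.range_add_one, Dprod_insert (by simp), Finset.prod_insert (by simp), ih]
    have h1 : (Finset.range n).filter (· < n) = Finset.range n := by
      apply Finset.filter_true_of_mem; intro x hx; simpa using hx
    have h2 : (Finset.range n).filter (n < ·) = ∅ := by
      apply Finset.filter_false_of_mem; intro x hx; simp at hx; omega
    rw [h1, h2]
    have h3 : ∏ t ∈ Finset.range n, ((n:ℚ) - t) = (n.factorial : ℚ) := by
      rw [prod_range_sub_cast le_rfl, Nat.descFactorial_self]
    rw [h3]
    simp [mul_comm]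

lemma filter_lt_erase (N j : ℕ) (hj : j < N) :
    ((Finset.range N).erase j).filter (· < j) = Finset.range j := by
  ext t; simp only [Finset.mem_filter, Finset.mem_erase, Finset.mem_range]; omega

lemma filter_gt_erase (N j : ℕ) (hj : j < N) :
    ((Finset.range N).erase j).filter (j < ·) = Finset.Ico (j+1) N := by
  ext t; simp only [Finset.mem_filter, Finset.mem_erase, Finset.mem_range, Finset.mem_Ico]; omega

lemma Dprod_erase (N j : ℕ) (hj : j < N) :
    Dprod ((Finset.range N).erase j) * ((j.factorial : ℚ) * ((N - 1 - j).factorial : ℚ))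
      = ∏ k ∈ Finset.range N, (k.factorial : ℚ) := by
  have key : Dprod (Finset.range N) =
      (∏ t ∈ ((Finset.range N).erase j).filter (· < j), ((j:ℚ) - t))
      * (∏ s ∈ ((Finset.range N).erase j).filter (j < ·), ((s:ℚ) - j))
      * Dprod ((Finset.range N).erase j) := by
    rw [← Dprod_insert (Finset.notMem_erase j _),
      Finset.insert_erase (by simp [Finset.mem_range]; omega)]
  have e1 : ∏ t ∈ ((Finset.range N).erase j).filter (· < j), ((j:ℚ) - t) = (j.factorial : ℚ) := by
    rw [filter_lt_erase N j hj, prod_range_sub_cast le_rfl, Nat.descFactorial_self]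
  have e2 : ∏ s ∈ ((Finset.range N).erase j).filter (j < ·), ((s:ℚ) - j)
      = ((N - 1 - j).factorial : ℚ) := by
    rw [filter_gt_erase N j hj, Finset.prod_Ico_eq_prod_range]
    have : ∀ t ∈ Finset.range (N - (j+1)), ((j + 1 + t : ℕ) : ℚ) - (j:ℚ) = (t:ℚ) + 1 := by
      intro t _; push_cast; ring
    rw [Finset.prod_congr rfl this, prod_range_add_one_cast]
    congr 2
    omega
  rw [← Dprod_range, key, e1, e2]
  ring

lemma vdm_eq_Dprod {n : ℕ} (v : Fin n → ℕ) (hv : StrictMono v) :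
    ∏ i : Fin n, ∏ j ∈ Finset.Ioi i, ((v j : ℚ) - (v i : ℚ))
      = Dprod (Finset.image v Finset.univ) := by
  unfold Dprod
  rw [Finset.prod_sigma', Finset.prod_sigma']
  refine Finset.prod_bij (fun p _ => ⟨v p.2, v p.1⟩) ?_ ?_ ?_ ?_
  · rintro ⟨i, j⟩ hp
    simp only [Finset.mem_sigma, Finset.mem_Ioi] at hp
    simp only [Finset.mem_sigma, Finset.mem_filter, Finset.mem_image]
    exact ⟨⟨j, Finset.mem_univ j, rfl⟩, ⟨i, Finset.mem_univ i, rfl⟩, hv hp.2⟩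
  · rintro ⟨i, j⟩ _ ⟨i', j'⟩ _ h
    rw [Sigma.mk.inj_iff] at h
    obtain ⟨h1, h2⟩ := h
    rw [heq_eq_eq] at h2
    have := hv.injective h1
    have := hv.injective h2
    simp_all
  · rintro ⟨s, t⟩ hp
    simp only [Finset.mem_sigma, Finset.mem_filter, Finset.mem_image] at hp
    obtain ⟨⟨a, _, ha⟩, ⟨b, _, hb⟩, hlt⟩ := hp
    refine ⟨⟨b, a⟩, ?_, ?_⟩
    · simp only [Finset.mem_sigma, Finset.mem_Ioi, Finset.mem_univ, true_and]
      exact hv.lt_iff_lt.mp (by rw [ha, hb]; exact hlt)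
    · simp [ha, hb]
  · rintro ⟨i, j⟩ _
    rfl

lemma descFactorial_add' (n a b : ℕ) :
    n.descFactorial (a + b) = n.descFactorial a * (n - a).descFactorial b := by
  induction b with
  | zero => simp
  | succ b ih =>
    rw [← Nat.add_assoc, Nat.descFactorial_succ, Nat.descFactorial_succ, ih]
    rw [Nat.sub_sub]
    ring

lemma descFac_split (M N j : ℕ) (hN : 1 ≤ N) (hMN : N ≤ M) (hj : j < N) :
    M.descFactorial N =
      (M.choose j * (M - j - 1).choose (N - j - 1)) *
        ((M - j) * (j.factorial * (N - 1 - j).factorial)) := by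
  have h1 : N = j + (1 + (N - j - 1)) := by omega
  conv_lhs => rw [h1]
  rw [descFactorial_add' M j, descFactorial_add' (M - j) 1]
  rw [Nat.descFactorial_one, Nat.descFactorial_eq_factorial_mul_choose M j,
    Nat.descFactorial_eq_factorial_mul_choose (M - j - 1) (N - j - 1)]
  have : N - 1 - j = N - j - 1 := by omega
  rw [this]
  ring

/-- the exponent sequence of the Jacobi–Trudi matrix for the hook partition -/
def mseq (M N j : ℕ) : Fin N → ℕ := fun i => hookP M N j i + (N - 1 - (i : ℕ))

section main

variable (M N j : ℕ)

lemma mseq_val (hN : 1 ≤ N) (hMN : N ≤ M) (hj : j < N) (i : Fin N) :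
    mseq M N j i = if (i:ℕ) = 0 then M else if (i:ℕ) < N - j then N - i else N - 1 - i := by
  unfold mseq hookP
  have hi : (i : ℕ) < N := i.isLt
  split_ifs with h1 h2 <;> omega

lemma mseq_strictAnti (hN : 1 ≤ N) (hMN : N ≤ M) (hj : j < N) :
    StrictAnti (mseq M N j) := by
  intro p q hpq
  have hp := mseq_val M N j hN hMN hj p
  have hq := mseq_val M N j hN hMN hj q
  have hpq' : (p : ℕ) < (q : ℕ) := hpq
  have hqN : (q : ℕ) < N := q.isLt
  rw [hp, hq]
  split_ifs <;> omega

lemma mseq_image (hN : 1 ≤ N) (hMN : N ≤ M) (hj : j < N) :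
    Finset.image (mseq M N j) Finset.univ = insert M ((Finset.range N).erase j) := by
  ext t
  simp only [Finset.mem_image, Finset.mem_insert, Finset.mem_erase, Finset.mem_range,
    Finset.mem_univ, true_and]
  constructor
  · rintro ⟨i, rfl⟩
    rw [mseq_val M N j hN hMN hj i]
    have hi : (i : ℕ) < N := i.isLt
    split_ifs <;> omega
  · rintro (h | ⟨htj, htN⟩)
    · refine ⟨⟨0, by omega⟩, ?_⟩
      rw [mseq_val M N j hN hMN hj]
      simp [h]
    · by_cases h : j < t
      · refine ⟨⟨N - t, by omega⟩, ?_⟩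
        rw [mseq_val M N j hN hMN hj]
        simp only []
        split_ifs <;> omega
      · refine ⟨⟨N - 1 - t, by omega⟩, ?_⟩
        rw [mseq_val M N j hN hMN hj]
        simp only []
        split_ifs <;> omega

lemma schur_eq_detA (hN : 1 ≤ N) (hMN : N ≤ M) (hj : j < N) :
    schurAt (fun _ : Fin N => (1 : ℚ)) (hookP M N j) =
      Matrix.det (Matrix.of fun i k : Fin N =>
        (((mseq M N j i + (k:ℕ)).choose (N-1) : ℕ) : ℚ)) := by
  unfold schurAt
  congr 1
  ext i k
  simp only [Matrix.of_apply]
  have e0 : mseq M N j i = hookP M N j i + (N - 1 - (i:ℕ)) := rfl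
  have hi : (i : ℕ) < N := i.isLt
  split_ifs with h
  · rw [hfun_ones]
    have e1 : N + (hookP M N j i + (k:ℕ) - (i:ℕ)) - 1
        = (hookP M N j i + (k:ℕ) - (i:ℕ)) + (N - 1) := by omega
    have e2 : mseq M N j i + (k:ℕ) = (hookP M N j i + (k:ℕ) - (i:ℕ)) + (N - 1) := by omega
    rw [e1, e2, Nat.choose_symm_add]
  · have hlt : mseq M N j i + (k:ℕ) < N - 1 := by omega
    rw [Nat.choose_eq_zero_of_lt hlt]
    simp

lemma detA_eq_detB (hN : 1 ≤ N) :
    Matrix.det (Matrix.of fun i k : Fin N =>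
        (((mseq M N j i + (k:ℕ)).choose (N-1) : ℕ) : ℚ)) =
      Matrix.det (Matrix.of fun i k : Fin N =>
        (((mseq M N j i).choose (N - 1 - (k:ℕ)) : ℕ) : ℚ)) := by
  have key : (Matrix.of fun i k : Fin N => (((mseq M N j i + (k:ℕ)).choose (N-1) : ℕ) : ℚ))
      = (Matrix.of fun i k : Fin N => (((mseq M N j i).choose (N - 1 - (k:ℕ)) : ℕ) : ℚ))
        * (Matrix.of fun k l : Fin N => (((l:ℕ).choose (k:ℕ) : ℕ) : ℚ)) := by
    ext i l
    rw [Matrix.mul_apply]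
    simp only [Matrix.of_apply]
    have h1 : mseq M N j i + (l:ℕ) = (l:ℕ) + mseq M N j i := by omega
    rw [h1, Nat.add_choose_eq]
    rw [Finset.Nat.sum_antidiagonal_eq_sum_range_succ
      (fun a b => (l:ℕ).choose a * (mseq M N j i).choose b) (N-1)]
    rw [show (N - 1).succ = N by omega]
    rw [← Fin.sum_univ_eq_sum_range (fun k => (l:ℕ).choose k * (mseq M N j i).choose (N-1-k)) N]
    push_cast
    exact Finset.sum_congr rfl (fun k _ => by ring)
  rw [key, Matrix.det_mul]
  have hD : Matrix.det (Matrix.of fun k l : Fin N => (((l:ℕ).choose (k:ℕ) : ℕ) : ℚ)) = 1 := by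
    rw [Matrix.det_of_upperTriangular]
    · rw [Finset.prod_congr rfl (fun k _ => by simp : ∀ k ∈ Finset.univ,
        (Matrix.of fun k l : Fin N => (((l:ℕ).choose (k:ℕ) : ℕ) : ℚ)) k k = 1)]
      simp
    · intro k l hkl
      simp only [Matrix.of_apply, id_eq] at hkl ⊢
      rw [Nat.choose_eq_zero_of_lt (by exact_mod_cast hkl)]
      simp
  rw [hD, mul_one]

lemma detB_eq_detC (hN : 1 ≤ N) :
    Matrix.det (Matrix.of fun i k : Fin N =>
        (((mseq M N j i).choose (N - 1 - (k:ℕ)) : ℕ) : ℚ)) =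
      Matrix.det (Matrix.of fun i k : Fin N =>
        (((mseq M N j (Fin.rev i)).choose (k:ℕ) : ℕ) : ℚ)) := by
  rw [← Matrix.det_submatrix_equiv_self Fin.revPerm
    (Matrix.of fun i k : Fin N => (((mseq M N j (Fin.rev i)).choose (k:ℕ) : ℕ) : ℚ))]
  congr 1
  ext i k
  simp only [Matrix.submatrix_apply, Matrix.of_apply, Fin.revPerm_apply, Fin.rev_rev]
  congr 2
  rw [Fin.val_rev]
  omega

lemma detC_eq_Dprod (hN : 1 ≤ N) (hMN : N ≤ M) (hj : j < N) :
    Matrix.det (Matrix.of fun i k : Fin N =>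
        (((mseq M N j (Fin.rev i)).choose (k:ℕ) : ℕ) : ℚ)) =
      Dprod (Finset.image (mseq M N j) Finset.univ)
        * ∏ k : Fin N, (((k:ℕ).factorial : ℚ))⁻¹ := by
  set v : Fin N → ℕ := fun i => mseq M N j (Fin.rev i) with hv
  have key : (Matrix.of fun i k : Fin N => (((v i).choose (k:ℕ) : ℕ) : ℚ))
      = (Matrix.of fun i k : Fin N => (descPochhammer ℚ (k:ℕ)).eval (((v i : ℕ)) : ℚ))
        * Matrix.diagonal (fun k : Fin N => (((k:ℕ).factorial : ℚ))⁻¹) := by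
    ext i k
    rw [Matrix.mul_diagonal]
    simp only [Matrix.of_apply]
    rw [descPochhammer_eval_eq_descFactorial, Nat.descFactorial_eq_factorial_mul_choose]
    push_cast
    rw [mul_comm (((k:ℕ).factorial : ℚ)) _, mul_assoc,
      mul_inv_cancel₀ (Nat.cast_ne_zero.mpr (Nat.factorial_ne_zero (k:ℕ))), mul_one]
  rw [key, Matrix.det_mul, Matrix.det_diagonal]
  congr 1
  rw [← Matrix.det_eval_matrixOfPolynomials_eq_det_vandermonde
    (fun i => ((v i : ℕ) : ℚ)) (fun k : Fin N => descPochhammer ℚ (k:ℕ))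
    (fun k => descPochhammer_natDegree (R := ℚ) (k:ℕ))
    (fun k => monic_descPochhammer ℚ (k:ℕ))]
  rw [Matrix.det_vandermonde]
  have hmono : StrictMono v := by
    intro a b hab
    apply mseq_strictAnti M N j hN hMN hj
    exact Fin.rev_lt_rev.mpr hab
  rw [vdm_eq_Dprod v hmono]
  congr 1
  apply Finset.ext
  intro t
  simp only [Finset.mem_image, Finset.mem_univ, true_and]
  constructor
  · rintro ⟨a, rfl⟩; exact ⟨Fin.rev a, rfl⟩
  · rintro ⟨a, rfl⟩; exact ⟨Fin.rev a, by simp [hv, Fin.rev_rev]⟩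

end main

/-- The Schur polynomial of the hook partition `μ(M,N,j)` evaluated at `N` ones equals
`binom(M,j) * binom(M-j-1, N-j-1)`. -/
theorem schur_hook_ones (M N j : ℕ) (hN : 1 ≤ N) (hMN : N ≤ M) (hj : j < N) :
    schurAt (fun _ : Fin N => (1 : ℚ)) (hookP M N j) =
      (M.choose j : ℚ) * ((M - j - 1).choose (N - j - 1) : ℚ) := by
  rw [schur_eq_detA M N j hN hMN hj, detA_eq_detB M N j hN, detB_eq_detC M N j hN,
    detC_eq_Dprod M N j hN hMN hj, mseq_image M N j hN hMN hj]
  have hMnot : M ∉ (Finset.range N).erase j := by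
    simp only [Finset.mem_erase, Finset.mem_range]; omega
  rw [Dprod_insert hMnot]
  have hfilt1 : ((Finset.range N).erase j).filter (· < M) = (Finset.range N).erase j := by
    apply Finset.filter_true_of_mem
    intro x hx
    simp only [Finset.mem_erase, Finset.mem_range] at hx
    omega
  have hfilt2 : ((Finset.range N).erase j).filter (M < ·) = ∅ := by
    apply Finset.filter_false_of_mem
    intro x hx
    simp only [Finset.mem_erase, Finset.mem_range] at hx
    omega
  rw [hfilt1, hfilt2, Finset.prod_empty, mul_one]
  have hprodinv : (∏ k : Fin N, (((k:ℕ).factorial : ℚ))⁻¹)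
      = (∏ k ∈ Finset.range N, ((k.factorial : ℚ)))⁻¹ := by
    rw [← Finset.prod_inv_distrib]
    exact Fin.prod_univ_eq_prod_range (fun k => ((k.factorial : ℚ))⁻¹) N
  rw [hprodinv]
  have hjM : j ≤ M := by omega
  have hP1 : (∏ t ∈ (Finset.range N).erase j, ((M:ℚ) - t)) * ((M:ℚ) - (j:ℚ))
      = (M.descFactorial N : ℚ) := by
    rw [Finset.prod_erase_mul (Finset.range N) (fun t => ((M:ℚ) - (t:ℚ)))
      (by simp only [Finset.mem_range]; omega : j ∈ Finset.range N)]
    exact prod_range_sub_cast hMN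
  have hDT := Dprod_erase N j hj
  have hPF : (∏ k ∈ Finset.range N, (k.factorial : ℚ)) ≠ 0 :=
    Finset.prod_ne_zero_iff.mpr (fun k _ => Nat.cast_ne_zero.mpr (Nat.factorial_ne_zero k))
  have hMj : ((M:ℚ) - (j:ℚ)) ≠ 0 := by
    have : (j:ℚ) < (M:ℚ) := by exact_mod_cast (by omega : j < M)
    exact sub_ne_zero.mpr (ne_of_gt this)
  have hX : ((M:ℚ) - (j:ℚ)) * ((j.factorial : ℚ) * ((N - 1 - j).factorial : ℚ)) ≠ 0 :=
    mul_ne_zero hMj (mul_ne_zero (Nat.cast_ne_zero.mpr (Nat.factorial_ne_zero j))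
      (Nat.cast_ne_zero.mpr (Nat.factorial_ne_zero (N - 1 - j))))
  have hcast : (M.descFactorial N : ℚ)
      = (M.choose j : ℚ) * ((M - j - 1).choose (N - j - 1) : ℚ)
        * (((M:ℚ) - (j:ℚ)) * ((j.factorial : ℚ) * ((N - 1 - j).factorial : ℚ))) := by
    rw [descFac_split M N j hN hMN hj]
    push_cast [Nat.cast_sub hjM]
    ring
  apply mul_right_cancel₀ hX
  have lhs_eq :
      ((∏ t ∈ (Finset.range N).erase j, ((M:ℚ) - t)) * Dprod ((Finset.range N).erase j)
        * (∏ k ∈ Finset.range N, (k.factorial : ℚ))⁻¹)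
        * (((M:ℚ) - (j:ℚ)) * ((j.factorial : ℚ) * ((N - 1 - j).factorial : ℚ)))
      = ((∏ t ∈ (Finset.range N).erase j, ((M:ℚ) - t)) * ((M:ℚ) - (j:ℚ)))
        * (Dprod ((Finset.range N).erase j) * ((j.factorial : ℚ) * ((N - 1 - j).factorial : ℚ)))
        * (∏ k ∈ Finset.range N, (k.factorial : ℚ))⁻¹ := by ring
  rw [lhs_eq, hP1, hDT, mul_assoc, mul_inv_cancel₀ hPF, mul_one, hcast]
end

section
/- Let F be a field and A an N × N matrix over F with rows a_1,...,a_N. Then for any M ≥ N, A^{∘M} = Σ_{j=0}^{N-1} D_{M,j}(A) A^{∘j}, where D_{M,j}(A) is the diagonal matrix with i-th diagonal entry (-1)^{N-j-1} s_{μ(M,N,j)}(a_i). -/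
open Matrix BigOperators

namespace HadAux

open Finset PowerSeries

variable {F : Type*} [CommRing F]

/-! ### Elementary and complete homogeneous symmetric functions of a list -/

def el : List F → ℕ → F
  | _, 0 => 1
  | [], _ + 1 => 0
  | a :: l, r + 1 => el l (r + 1) + a * el l r

def hl : List F → ℕ → F
  | _, 0 => 1
  | [], _ + 1 => 0
  | a :: l, k + 1 => a * hl (a :: l) k + hl l (k + 1)
  termination_by l k => (l.length, k)

@[simp] lemma el_zero (l : List F) : el l 0 = 1 := by cases l <;> rfl
@[simp] lemma hl_zero (l : List F) : hl l 0 = 1 := by cases l <;> simp [hl]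
@[simp] lemma el_nil_succ (r : ℕ) : el ([] : List F) (r + 1) = 0 := rfl
@[simp] lemma hl_nil_succ (r : ℕ) : hl ([] : List F) (r + 1) = 0 := by simp [hl]

lemma el_cons_succ (a : F) (l : List F) (r : ℕ) :
    el (a :: l) (r + 1) = el l (r + 1) + a * el l r := rfl

lemma hl_cons_succ (a : F) (l : List F) (k : ℕ) :
    hl (a :: l) (k + 1) = a * hl (a :: l) k + hl l (k + 1) := by
  rw [hl]

lemma el_eq_zero (l : List F) {r : ℕ} (h : l.length < r) : el l r = 0 := by
  induction l generalizing r with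
  | nil => cases r with
    | zero => omega
    | succ r => rfl
  | cons a l ih =>
    cases r with
    | zero => simp at h
    | succ r =>
      rw [el_cons_succ, ih (by simp at h; omega), ih (by simp at h; omega)]
      ring

lemma hl_cons_sum (a : F) (l : List F) (k : ℕ) :
    hl (a :: l) k = ∑ c ∈ range (k + 1), a ^ c * hl l (k - c) := by
  induction k with
  | zero => simp
  | succ k ih =>
    rw [hl_cons_succ, ih, Finset.mul_sum, Finset.sum_range_succ' (fun c => a ^ c * hl l (k + 1 - c))]
    simp only [pow_zero, one_mul, Nat.sub_zero]
    congr 1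
    apply Finset.sum_congr rfl
    intro c _
    have h1 : k + 1 - (c + 1) = k - c := by omega
    rw [h1, pow_succ]; ring

/-! ### Power series: `E(X) H(X) = 1` -/

noncomputable def Es (l : List F) : PowerSeries F := PowerSeries.mk fun r => (-1) ^ r * el l r
noncomputable def Hs (l : List F) : PowerSeries F := PowerSeries.mk (hl l)
noncomputable def Geo (a : F) : PowerSeries F := PowerSeries.mk fun c => a ^ c

lemma geo_unit (a : F) : (1 - C a * X) * Geo a = 1 := by
  ext n
  cases n with
  | zero =>
    simp [Geo, PowerSeries.coeff_zero_eq_constantCoeff]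
  | succ n =>
    rw [sub_mul, one_mul, map_sub]
    have h1 : (C a * X) * Geo a = (Geo a * X) * C a := by ring
    rw [h1, coeff_mul_C, coeff_succ_mul_X]
    simp [Geo, coeff_one, pow_succ, mul_comm]

lemma Es_cons (a : F) (l : List F) : Es (a :: l) = (1 - C a * X) * Es l := by
  ext n
  rw [sub_mul, one_mul, map_sub]
  cases n with
  | zero => simp [Es]
  | succ n =>
    have h1 : (C a * X) * Es l = (Es l * X) * C a := by ring
    rw [h1, coeff_mul_C, coeff_succ_mul_X]
    simp only [Es, coeff_mk, el_cons_succ]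
    ring

lemma Hs_cons (a : F) (l : List F) : Hs (a :: l) = Geo a * Hs l := by
  ext k
  rw [PowerSeries.coeff_mul, Finset.Nat.sum_antidiagonal_eq_sum_range_succ_mk]
  simp only [Hs, Geo, coeff_mk]
  exact hl_cons_sum a l k

lemma Es_mul_Hs (l : List F) : Es l * Hs l = 1 := by
  induction l with
  | nil =>
    have he : Es ([] : List F) = 1 := by
      ext n; cases n <;> simp [Es, coeff_one]
    have hh : Hs ([] : List F) = 1 := by
      ext n; cases n <;> simp [Hs, coeff_one]
    rw [he, hh, one_mul]
  | cons a l ih =>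
    rw [Es_cons, Hs_cons]
    calc (1 - C a * X) * Es l * (Geo a * Hs l)
        = (Es l * Hs l) * ((1 - C a * X) * Geo a) := by ring
      _ = 1 := by rw [ih, geo_unit, one_mul]

lemma eh_identity (l : List F) {k : ℕ} (hk : 1 ≤ k) :
    ∑ r ∈ range (k + 1), (-1 : F) ^ r * el l r * hl l (k - r) = 0 := by
  have h := congrArg (PowerSeries.coeff k) (Es_mul_Hs l)
  rw [PowerSeries.coeff_mul, Finset.Nat.sum_antidiagonal_eq_sum_range_succ_mk, coeff_one,
    if_neg (by omega)] at h
  simpa [Es, Hs, mul_assoc] using h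

/-! ### The characteristic-polynomial expansion and root identity -/

lemma prod_expand (l : List F) (y : F) :
    (l.map (fun a => y - a)).prod
      = ∑ r ∈ range (l.length + 1), (-1 : F) ^ r * el l r * y ^ (l.length - r) := by
  induction l with
  | nil => simp
  | cons a l ih =>
    set n := l.length with hn
    have hlen : (a :: l).length = n + 1 := by simp [hn]
    rw [List.map_cons, List.prod_cons, ih, hlen]
    rw [Finset.sum_range_succ' (fun r => (-1 : F) ^ r * el (a :: l) r * y ^ (n + 1 - r))]
    have hsplit : ∀ r ∈ range (n + 1),
        (-1 : F) ^ (r + 1) * el (a :: l) (r + 1) * y ^ (n + 1 - (r + 1))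
          = (-1 : F) ^ (r + 1) * el l (r + 1) * y ^ (n - r)
            + (-(a * ((-1 : F) ^ r * el l r * y ^ (n - r)))) := by
      intro r _
      rw [el_cons_succ]
      have : n + 1 - (r + 1) = n - r := by omega
      rw [this, pow_succ]
      ring
    rw [Finset.sum_congr rfl hsplit, Finset.sum_add_distrib]
    have h2 : ∑ r ∈ range (n + 1), (-(a * ((-1 : F) ^ r * el l r * y ^ (n - r))))
        = -(a * ∑ r ∈ range (n + 1), (-1 : F) ^ r * el l r * y ^ (n - r)) := by
      rw [Finset.mul_sum, ← Finset.sum_neg_distrib]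
    have h3 : ∑ r ∈ range (n + 1), (-1 : F) ^ (r + 1) * el l (r + 1) * y ^ (n - r)
          + ((-1 : F) ^ 0 * el (a :: l) 0 * y ^ (n + 1 - 0))
        = y * ∑ r ∈ range (n + 1), (-1 : F) ^ r * el l r * y ^ (n - r) := by
      rw [Finset.mul_sum, Finset.sum_range_succ
        (fun r => (-1 : F) ^ (r + 1) * el l (r + 1) * y ^ (n - r)), el_eq_zero l (by omega)]
      rw [Finset.sum_range_succ' (fun r => y * ((-1 : F) ^ r * el l r * y ^ (n - r)))]
      simp only [el_zero, pow_zero, one_mul, mul_zero, zero_mul, mul_one, add_zero, Nat.sub_zero]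
      congr 1
      · apply Finset.sum_congr rfl
        intro r hr
        have hr' : r < n := by simpa using hr
        have : n - r = (n - (r + 1)) + 1 := by omega
        rw [this, pow_succ]
        ring
      · rw [← pow_succ']
    calc (y - a) * ∑ r ∈ range (n + 1), (-1 : F) ^ r * el l r * y ^ (n - r)
        = y * (∑ r ∈ range (n + 1), (-1 : F) ^ r * el l r * y ^ (n - r))
          + (-(a * ∑ r ∈ range (n + 1), (-1 : F) ^ r * el l r * y ^ (n - r))) := by ring
      _ = _ := by rw [← h2, ← h3]; ring

lemma root_identity (l : List F) {y : F} (hy : y ∈ l) :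
    ∑ r ∈ range (l.length + 1), (-1 : F) ^ r * el l r * y ^ (l.length - r) = 0 := by
  rw [← prod_expand]
  apply List.prod_eq_zero
  simpa [sub_eq_zero] using hy

/-! ### Bridging `hfun` to `hl` -/

lemma bnd {N K k : ℕ} {d : Fin N → Fin (K + 1)} (hd : ∑ i, (d i : ℕ) = k) (i : Fin N) :
    (d i : ℕ) ≤ k :=
  hd ▸ Finset.single_le_sum (f := fun j => (d j : ℕ)) (fun _ _ => Nat.zero_le _)
    (Finset.mem_univ i)

lemma hfun_bounded {N K k : ℕ} (y : Fin N → F) (h : k ≤ K) :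
    ∑ d ∈ Finset.univ.filter (fun d : Fin N → Fin (K + 1) => ∑ i, (d i : ℕ) = k),
      ∏ i, y i ^ (d i : ℕ) = hfun y k := by
  rw [hfun]
  refine Finset.sum_nbij' (fun d => fun i => (⟨min (d i : ℕ) k, by omega⟩ : Fin (k + 1)))
    (fun d => fun i => Fin.castLE (by omega) (d i)) ?_ ?_ ?_ ?_ ?_
  · intro d hd
    rw [Finset.mem_filter] at hd ⊢
    refine ⟨Finset.mem_univ _, ?_⟩
    refine Eq.trans (Finset.sum_congr rfl fun i _ => ?_) hd.2
    show min (d i : ℕ) k = (d i : ℕ)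
    exact Nat.min_eq_left (bnd hd.2 i)
  · intro d hd
    rw [Finset.mem_filter] at hd ⊢
    exact ⟨Finset.mem_univ _, by simpa using hd.2⟩
  · intro d hd
    rw [Finset.mem_filter] at hd
    funext i
    apply Fin.ext
    simp [Nat.min_eq_left (bnd hd.2 i)]
  · intro d hd
    rw [Finset.mem_filter] at hd
    funext i
    apply Fin.ext
    simp [Nat.min_eq_left (bnd hd.2 i)]
  · intro d hd
    rw [Finset.mem_filter] at hd
    apply Finset.prod_congr rfl
    intro i _
    simp [Nat.min_eq_left (bnd hd.2 i)]

lemma hfun_cons {N : ℕ} (a : F) (y : Fin N → F) (k : ℕ) :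
    hfun (Fin.cons a y) k = ∑ c ∈ range (k + 1), a ^ c * hfun y (k - c) := by
  rw [hfun, Finset.sum_filter]
  set G := fun d : Fin (N + 1) → Fin (k + 1) =>
    if ∑ i, (d i : ℕ) = k then ∏ i : Fin (N + 1), (Fin.cons a y : Fin (N + 1) → F) i ^ (d i : ℕ)
    else 0 with hG
  rw [← Fintype.sum_equiv (Fin.consEquiv (fun _ : Fin (N + 1) => Fin (k + 1)))
    (fun p => G ((Fin.consEquiv (fun _ : Fin (N + 1) => Fin (k + 1))) p)) G (fun p => rfl),
    Fintype.sum_prod_type]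
  rw [← Fin.sum_univ_eq_sum_range (fun c => a ^ c * hfun y (k - c))]
  apply Finset.sum_congr rfl
  intro c _
  have hc : (c : ℕ) ≤ k := by omega
  calc ∑ d : Fin N → Fin (k + 1), G ((Fin.consEquiv (fun _ : Fin (N + 1) => Fin (k + 1))) (c, d))
      = ∑ d : Fin N → Fin (k + 1),
        (if ∑ i, (d i : ℕ) = k - (c : ℕ) then a ^ (c : ℕ) * ∏ i, y i ^ (d i : ℕ) else 0) := by
        apply Finset.sum_congr rfl
        intro d _
        simp only [hG, Fin.consEquiv_apply, Fin.sum_univ_succ, Fin.prod_univ_succ,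
          Fin.cons_zero, Fin.cons_succ]
        have hiff : ((c : ℕ) + (∑ i, (d i : ℕ)) = k) ↔ ((∑ i, (d i : ℕ)) = k - (c : ℕ)) := by
          omega
        rw [if_congr hiff rfl rfl]
    _ = a ^ (c : ℕ) * hfun y (k - (c : ℕ)) := by
        rw [← hfun_bounded (K := k) y (by omega), Finset.sum_filter, Finset.mul_sum]
        apply Finset.sum_congr rfl
        intro d _
        split <;> simp

lemma hfun_eq_hl {N : ℕ} (x : Fin N → F) (k : ℕ) : hfun x k = hl (List.ofFn x) k := by
  induction N generalizing k with
  | zero =>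
    rw [List.ofFn_zero]
    cases k with
    | zero => simp [hfun]
    | succ k =>
      rw [hl_nil_succ, hfun]
      rw [Finset.filter_false_of_mem (fun d _ => by simp), Finset.sum_empty]
  | succ n ih =>
    rw [← Fin.cons_self_tail x, hfun_cons, List.ofFn_succ, hl_cons_sum]
    simp only [Fin.cons_zero, Fin.cons_succ]
    apply Finset.sum_congr rfl
    intro c _
    rw [ih]

@[simp] lemma hfun_zero {N : ℕ} (x : Fin N → F) : hfun x 0 = 1 := by
  rw [hfun_eq_hl, hl_zero]

lemma eh_identity' {N : ℕ} (x : Fin N → F) {k : ℕ} (hk : 1 ≤ k) :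
    ∑ r ∈ range (k + 1), (-1 : F) ^ r * el (List.ofFn x) r * hfun x (k - r) = 0 := by
  simp only [hfun_eq_hl]
  exact eh_identity _ hk

/-! ### Sign helpers -/

lemma neg_one_sq_pow (b : ℕ) : ((-1 : F)) ^ b * (-1) ^ b = 1 := by
  rw [← pow_add]; exact Even.neg_one_pow (Even.add_self b)

lemma neg_one_pow_sub {a t : ℕ} (h : t ≤ a) :
    ((-1 : F)) ^ (a - t) = (-1) ^ a * (-1) ^ t := by
  have key : a - t + t = a := by omega
  calc ((-1 : F)) ^ (a - t) = (-1) ^ (a - t) * ((-1) ^ t * (-1) ^ t) := by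
        rw [neg_one_sq_pow, mul_one]
    _ = (-1) ^ a * (-1) ^ t := by rw [← mul_assoc, ← pow_add, key]

/-! ### The `h`/`e` summation identity -/

lemma sum_h1 {N : ℕ} (x : Fin N → F) (b : ℕ) :
    ∑ t ∈ range (b + 1), (-1 : F) ^ t * hfun x (1 + t) * el (List.ofFn x) (b - t)
      = el (List.ofFn x) (b + 1) := by
  rw [← Finset.sum_range_reflect]
  simp only [Nat.add_sub_cancel]
  have step : ∀ t ∈ range (b + 1),
      (-1 : F) ^ (b - t) * hfun x (1 + (b - t)) * el (List.ofFn x) (b - (b - t))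
        = (-1 : F) ^ b * ((-1 : F) ^ t * el (List.ofFn x) t * hfun x (b + 1 - t)) := by
    intro t ht
    have ht' : t ≤ b := by simpa [Nat.lt_succ_iff] using ht
    rw [neg_one_pow_sub ht']
    have h1 : 1 + (b - t) = b + 1 - t := by omega
    have h2 : b - (b - t) = t := by omega
    rw [h1, h2]
    ring
  rw [Finset.sum_congr rfl step, ← Finset.mul_sum]
  have eh := eh_identity' x (k := b + 1) (by omega)
  rw [Finset.sum_range_succ] at eh
  have hlast : (-1 : F) ^ (b + 1) * el (List.ofFn x) (b + 1) * hfun x (b + 1 - (b + 1)) =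
      (-1 : F) ^ (b + 1) * el (List.ofFn x) (b + 1) := by
    rw [Nat.sub_self, hfun_zero, mul_one]
  rw [hlast] at eh
  have hsum : ∑ r ∈ range (b + 1), (-1 : F) ^ r * el (List.ofFn x) r * hfun x (b + 1 - r)
      = (-1 : F) ^ b * el (List.ofFn x) (b + 1) := by
    have hps : ((-1 : F)) ^ (b + 1) = -((-1 : F) ^ b) := by
      rw [pow_succ]; ring
    rw [hps] at eh
    linear_combination eh
  rw [hsum, ← mul_assoc, neg_one_sq_pow, one_mul]

/-! ### Determinant evaluation of the hook Jacobi–Trudi matrices -/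

noncomputable def Emat {N : ℕ} (x : Fin N → F) (b : ℕ) : Matrix (Fin b) (Fin b) F :=
  Matrix.of fun r c => if (r : ℕ) ≤ (c : ℕ) + 1 then hfun x ((c : ℕ) + 1 - (r : ℕ)) else 0

noncomputable def Jmat {N : ℕ} (x : Fin N → F) (b m : ℕ) : Matrix (Fin (b + 1)) (Fin (b + 1)) F :=
  Matrix.of fun r c => if (r : ℕ) = 0 then hfun x (m + (c : ℕ))
    else if (r : ℕ) ≤ (c : ℕ) + 1 then hfun x ((c : ℕ) + 1 - (r : ℕ)) else 0

lemma JE {N : ℕ} (x : Fin N → F) : ∀ b : ℕ,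
    (det (Emat x b) = el (List.ofFn x) b) ∧
    (∀ m : ℕ, det (Jmat x b m) =
      ∑ t ∈ range (b + 1), (-1 : F) ^ t * hfun x (m + t) * el (List.ofFn x) (b - t)) := by
  intro b
  induction b with
  | zero =>
    constructor
    · simp [Matrix.det_fin_zero]
    · intro m
      rw [Matrix.det_fin_one]
      simp [Jmat]
  | succ b ih =>
    have hE : det (Emat x (b + 1)) = el (List.ofFn x) (b + 1) := by
      have hmat : Emat x (b + 1) = Jmat x b 1 := by
        ext r c
        simp only [Emat, Jmat, Matrix.of_apply]
        by_cases hr : (r : ℕ) = 0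
        · rw [if_pos (by omega), if_pos hr]
          congr 1
          omega
        · rw [if_neg hr]
      rw [hmat, (ih.2) 1]
      exact sum_h1 x b
    refine ⟨hE, ?_⟩
    intro m
    have expand := Matrix.det_succ_column_zero (Jmat x (b + 1) m)
    rw [Fin.sum_univ_succ, Fin.sum_univ_succ] at expand
    have hsub0 : (Jmat x (b + 1) m).submatrix (0 : Fin (b + 2)).succAbove Fin.succ
        = Emat x (b + 1) := by
      rw [Fin.succAbove_zero]
      ext r c
      simp only [Jmat, Emat, Matrix.submatrix_apply, Matrix.of_apply, Fin.val_succ]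
      rw [if_neg (Nat.succ_ne_zero _)]
      by_cases h : (r : ℕ) ≤ (c : ℕ) + 1
      · rw [if_pos (by omega), if_pos h]
        congr 1
        omega
      · rw [if_neg (by omega), if_neg h]
    have hsub1 : (Jmat x (b + 1) m).submatrix ((0 : Fin (b + 1)).succ).succAbove Fin.succ
        = Jmat x b (m + 1) := by
      ext r c
      induction r using Fin.cases with
      | zero =>
        have hsa : ((0 : Fin (b + 1)).succ).succAbove 0 = 0 := by
          rw [Fin.succAbove_of_castSucc_lt]
          · rfl
          · simp [Fin.lt_def]
        simp only [Matrix.submatrix_apply, hsa, Jmat, Matrix.of_apply, Fin.val_zero,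
          Fin.val_succ, if_true]
        congr 1
        omega
      | succ j =>
        have hsa : ((0 : Fin (b + 1)).succ).succAbove j.succ = j.succ.succ := by
          rw [Fin.succAbove_of_le_castSucc]
          simp [Fin.le_def]
        simp only [Matrix.submatrix_apply, hsa, Jmat, Matrix.of_apply, Fin.val_succ]
        rw [if_neg (Nat.succ_ne_zero _), if_neg (Nat.succ_ne_zero _)]
        by_cases h : (j : ℕ) + 1 ≤ (c : ℕ) + 1
        · rw [if_pos (by omega), if_pos h]
          congr 1
          omega
        · rw [if_neg (by omega), if_neg h]
    have hrest : ∀ i : Fin b,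
        (-1 : F) ^ ((i.succ.succ : Fin (b + 2)) : ℕ) * Jmat x (b + 1) m i.succ.succ 0
          * det ((Jmat x (b + 1) m).submatrix (i.succ.succ).succAbove Fin.succ) = 0 := by
      intro i
      have hz : Jmat x (b + 1) m i.succ.succ 0 = 0 := by
        simp only [Jmat, Matrix.of_apply, Fin.val_succ, Fin.val_zero]
        exact if_neg (by omega)
      rw [hz]
      ring
    rw [Finset.sum_congr rfl (fun i _ => hrest i), Finset.sum_const_zero, add_zero] at expand
    have hA00 : Jmat x (b + 1) m 0 0 = hfun x m := by
      simp only [Jmat, Matrix.of_apply, Fin.val_zero, if_true]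
      congr 1
    have hA10 : Jmat x (b + 1) m (0 : Fin (b + 1)).succ 0 = 1 := by
      simp only [Jmat, Matrix.of_apply, Fin.val_succ, Fin.val_zero]
      simp
    rw [hsub0, hsub1, hA00, hA10, hE, ih.2 (m + 1)] at expand
    rw [expand]
    rw [Finset.sum_range_succ' (fun t => (-1 : F) ^ t * hfun x (m + t)
      * el (List.ofFn x) (b + 1 - t))]
    have hterm : ∀ t ∈ range (b + 1),
        (-1 : F) ^ (t + 1) * hfun x (m + (t + 1)) * el (List.ofFn x) (b + 1 - (t + 1))
          = -((-1 : F) ^ t * hfun x (m + 1 + t) * el (List.ofFn x) (b - t)) := by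
      intro t _
      have h1 : m + (t + 1) = m + 1 + t := by omega
      have h2 : b + 1 - (t + 1) = b - t := by omega
      rw [h1, h2, pow_succ]
      ring
    rw [Finset.sum_congr rfl hterm, Finset.sum_neg_distrib]
    simp only [pow_zero, one_mul, Nat.add_zero, Nat.sub_zero, Fin.val_zero, Fin.val_succ]
    ring

/-! ### Reduction of the hook Jacobi–Trudi determinant -/

noncomputable def Gmat {N : ℕ} (x : Fin N → F) (n m b : ℕ) : Matrix (Fin n) (Fin n) F :=
  Matrix.of fun i c => if (i : ℕ) = 0 then hfun x (m + (c : ℕ))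
    else if (i : ℕ) ≤ b then (if (i : ℕ) ≤ (c : ℕ) + 1 then hfun x ((c : ℕ) + 1 - (i : ℕ)) else 0)
    else (if (i : ℕ) ≤ (c : ℕ) then hfun x ((c : ℕ) - (i : ℕ)) else 0)

lemma Gmat_peel {N : ℕ} (x : Fin N → F) (s b m : ℕ) (hb : b < s) :
    det (Gmat x (s + 1) m b) = det (Gmat x s m b) := by
  rw [Matrix.det_succ_row (Gmat x (s + 1) m b) (Fin.last s)]
  rw [Finset.sum_eq_single_of_mem (Fin.last s) (Finset.mem_univ _)]
  · have hent : Gmat x (s + 1) m b (Fin.last s) (Fin.last s) = 1 := by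
      simp only [Gmat, Matrix.of_apply, Fin.val_last]
      rw [if_neg (by omega), if_neg (by omega), if_pos (le_refl s), Nat.sub_self]
      exact hfun_zero x
    have hsub : (Gmat x (s + 1) m b).submatrix (Fin.last s).succAbove (Fin.last s).succAbove
        = Gmat x s m b := by
      rw [Fin.succAbove_last]
      ext r c
      simp only [Gmat, Matrix.submatrix_apply, Matrix.of_apply, Fin.coe_castSucc]
    rw [hent, hsub, Fin.val_last, mul_one, Even.neg_one_pow (Even.add_self s), one_mul]
  · intro j _ hj
    have hz : Gmat x (s + 1) m b (Fin.last s) j = 0 := by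
      simp only [Gmat, Matrix.of_apply, Fin.val_last]
      have hjs : (j : ℕ) < s := by
        rcases lt_or_eq_of_le (Nat.lt_succ_iff.mp j.isLt) with h | h
        · exact h
        · exact absurd (Fin.ext h : j = Fin.last s) hj
      rw [if_neg (by omega), if_neg (by omega), if_neg (by omega)]
    rw [hz]
    ring

lemma Gmat_reduce {N : ℕ} (x : Fin N → F) (n b m : ℕ) (hb : b < n) :
    det (Gmat x n m b) = det (Gmat x (b + 1) m b) := by
  obtain ⟨k, rfl⟩ : ∃ k, n = b + 1 + k := ⟨n - (b + 1), by omega⟩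
  induction k with
  | zero => rfl
  | succ k ih =>
    rw [show b + 1 + (k + 1) = (b + 1 + k) + 1 from by omega, Gmat_peel x _ _ _ (by omega),
      ih (by omega)]

lemma Gmat_eq_Jmat {N : ℕ} (x : Fin N → F) (b m : ℕ) : Gmat x (b + 1) m b = Jmat x b m := by
  ext i c
  simp only [Gmat, Jmat, Matrix.of_apply]
  by_cases hi : (i : ℕ) = 0
  · rw [if_pos hi, if_pos hi]
  · rw [if_neg hi, if_neg hi, if_pos (by omega)]

lemma schurAt_hook {N M j : ℕ} (x : Fin N → F) (hj : j < N) (hMN : N ≤ M) :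
    schurAt x (hookP M N j) = det (Gmat x N (M - N + 1) (N - 1 - j)) := by
  unfold schurAt
  congr 1
  ext i c
  unfold Gmat hookP
  simp only [Matrix.of_apply]
  split_ifs <;> first | rfl | (congr 1; omega) | (exfalso; omega)

/-- The closed form of the hook Schur polynomial. -/
lemma schur_eq_S {N M j : ℕ} (x : Fin N → F) (hj : j < N) (hMN : N ≤ M) :
    schurAt x (hookP M N j) =
      ∑ t ∈ range (N - j), (-1 : F) ^ t * hfun x (M - N + 1 + t)
        * el (List.ofFn x) (N - 1 - j - t) := by
  rw [schurAt_hook x hj hMN, Gmat_reduce x N (N - 1 - j) (M - N + 1) (by omega),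
    Gmat_eq_Jmat, (JE x (N - 1 - j)).2 (M - N + 1), show N - 1 - j + 1 = N - j from by omega]

/-! ### The key pointwise identity -/

noncomputable def Sf {N : ℕ} (x : Fin N → F) (M j : ℕ) : F :=
  ∑ t ∈ range (N - j), (-1 : F) ^ t * hfun x (M - N + 1 + t) * el (List.ofFn x) (N - 1 - j - t)

lemma root' {N : ℕ} (x : Fin N → F) (k : Fin N) :
    (x k) ^ N = ∑ j ∈ range N, (-1 : F) ^ (N - 1 - j) * el (List.ofFn x) (N - j) * (x k) ^ j := by
  have hmem : x k ∈ List.ofFn x := by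
    rw [List.mem_ofFn]
    exact ⟨k, rfl⟩
  have h0 := root_identity (List.ofFn x) hmem
  rw [List.length_ofFn, Finset.sum_range_succ'] at h0
  simp only [pow_zero, one_mul, el_zero, Nat.sub_zero] at h0
  rw [← Finset.sum_range_reflect]
  have step : ∀ r ∈ range N,
      (-1 : F) ^ (N - 1 - (N - 1 - r)) * el (List.ofFn x) (N - (N - 1 - r)) * (x k) ^ (N - 1 - r)
        = -((-1 : F) ^ (r + 1) * el (List.ofFn x) (r + 1) * (x k) ^ (N - (r + 1))) := by
    intro r hr
    have hrN : r < N := Finset.mem_range.mp hr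
    have e1 : N - 1 - (N - 1 - r) = r := by omega
    have e2 : N - (N - 1 - r) = r + 1 := by omega
    have e3 : N - (r + 1) = N - 1 - r := by omega
    rw [e1, e2, e3, pow_succ]
    ring
  rw [Finset.sum_congr rfl step, Finset.sum_neg_distrib]
  linear_combination h0

lemma Sf_base {N j : ℕ} (x : Fin N → F) (hj : j < N) :
    Sf x N j = el (List.ofFn x) (N - j) := by
  unfold Sf
  have hb : N - j = (N - j - 1) + 1 := by omega
  rw [hb, ← sum_h1 x (N - j - 1)]
  apply Finset.sum_congr rfl
  intro t ht
  have e1 : N - N + 1 + t = 1 + t := by omega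
  have e2 : N - 1 - j - t = N - j - 1 - t := by omega
  rw [e1, e2]

lemma T_vanish {N : ℕ} (x : Fin N → F) {m : ℕ} (hm : 1 ≤ m) :
    ∑ t ∈ range (N + 1), (-1 : F) ^ t * hfun x (m + t) * el (List.ofFn x) (N - t) = 0 := by
  have eh := eh_identity' x (k := N + m) (by omega)
  have trunc : ∑ r ∈ range (N + m + 1), (-1 : F) ^ r * el (List.ofFn x) r * hfun x (N + m - r)
      = ∑ r ∈ range (N + 1), (-1 : F) ^ r * el (List.ofFn x) r * hfun x (N + m - r) := by
    symm
    apply Finset.sum_subset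
    · intro r hr
      rw [Finset.mem_range] at hr ⊢
      omega
    · intro r _ hr2
      rw [Finset.mem_range] at hr2
      rw [el_eq_zero _ (by rw [List.length_ofFn]; omega)]
      ring
  rw [trunc] at eh
  rw [← Finset.sum_range_reflect]
  simp only [Nat.add_sub_cancel]
  have step : ∀ t ∈ range (N + 1),
      (-1 : F) ^ (N - t) * hfun x (m + (N - t)) * el (List.ofFn x) (N - (N - t))
        = (-1 : F) ^ N * ((-1 : F) ^ t * el (List.ofFn x) t * hfun x (N + m - t)) := by
    intro t ht
    have ht' : t ≤ N := by
      have := Finset.mem_range.mp ht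
      omega
    rw [neg_one_pow_sub ht']
    have e1 : m + (N - t) = N + m - t := by omega
    have e2 : N - (N - t) = t := by omega
    rw [e1, e2]
    ring
  rw [Finset.sum_congr rfl step, ← Finset.mul_sum, eh, mul_zero]

lemma Sf_zero_succ {N M : ℕ} (x : Fin N → F) (hN : 1 ≤ N) (hM : N ≤ M) :
    Sf x (M + 1) 0 = hfun x (M - N + 1) * el (List.ofFn x) N := by
  unfold Sf
  have hT := T_vanish x (m := M - N + 1) (by omega)
  rw [Finset.sum_range_succ'] at hT
  simp only [pow_zero, one_mul, Nat.add_zero, Nat.sub_zero] at hT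
  simp only [Nat.sub_zero]
  have step : ∀ t ∈ range N,
      (-1 : F) ^ t * hfun x (M + 1 - N + 1 + t) * el (List.ofFn x) (N - 1 - t)
        = -((-1 : F) ^ (t + 1) * hfun x (M - N + 1 + (t + 1)) * el (List.ofFn x) (N - (t + 1))) := by
    intro t ht
    have htN : t < N := Finset.mem_range.mp ht
    have e1 : M + 1 - N + 1 + t = M - N + 1 + (t + 1) := by omega
    have e2 : N - 1 - t = N - (t + 1) := by omega
    rw [e1, e2, pow_succ]
    ring
  rw [Finset.sum_congr rfl step, Finset.sum_neg_distrib]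
  linear_combination -hT

lemma Sf_succ {N M j : ℕ} (x : Fin N → F) (hj : j + 1 < N) (hM : N ≤ M) :
    Sf x (M + 1) (j + 1)
      = hfun x (M - N + 1) * el (List.ofFn x) (N - (j + 1)) - Sf x M j := by
  unfold Sf
  rw [show N - j = (N - (j + 1)) + 1 from by omega]
  rw [Finset.sum_range_succ' (fun t =>
    (-1 : F) ^ t * hfun x (M - N + 1 + t) * el (List.ofFn x) (N - 1 - j - t))]
  have step : ∀ t ∈ range (N - (j + 1)),
      (-1 : F) ^ t * hfun x (M + 1 - N + 1 + t) * el (List.ofFn x) (N - 1 - (j + 1) - t)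
        = -((-1 : F) ^ (t + 1) * hfun x (M - N + 1 + (t + 1))
            * el (List.ofFn x) (N - 1 - j - (t + 1))) := by
    intro t _
    have e1 : M + 1 - N + 1 + t = M - N + 1 + (t + 1) := by omega
    have e2 : N - 1 - (j + 1) - t = N - 1 - j - (t + 1) := by omega
    rw [e1, e2, pow_succ]
    ring
  rw [Finset.sum_congr rfl step, Finset.sum_neg_distrib]
  simp only [pow_zero, one_mul, Nat.add_zero, Nat.sub_zero]
  rw [show N - 1 - j = N - (j + 1) from by omega]
  ring

lemma key {n : ℕ} (x : Fin (n + 1) → F) {M : ℕ} (hM : n + 1 ≤ M) (k : Fin (n + 1)) :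
    (x k) ^ M = ∑ j ∈ range (n + 1), (-1 : F) ^ (n + 1 - 1 - j) * Sf x M j * (x k) ^ j := by
  induction M, hM using Nat.le_induction with
  | base =>
    rw [root' x k]
    exact Finset.sum_congr rfl fun j hj => by rw [Sf_base x (Finset.mem_range.mp hj)]
  | succ M hM ih =>
    have hSfn : Sf x M n = hfun x (M - (n + 1) + 1) := by
      unfold Sf
      rw [show (n + 1) - n = 1 from by omega, Finset.sum_range_one,
        show (n + 1) - 1 - n - 0 = 0 from by omega]
      simp
    have h1 : (x k) ^ (M + 1)
        = (∑ j ∈ range n, (-1 : F) ^ (n + 1 - 1 - j) * Sf x M j * (x k) ^ (j + 1))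
          + hfun x (M - (n + 1) + 1) * (x k) ^ (n + 1) := by
      have hy : (x k) ^ (M + 1) = x k * (x k) ^ M := by ring
      rw [hy, ih, Finset.mul_sum, Finset.sum_range_succ]
      congr 1
      · apply Finset.sum_congr rfl
        intro j hj
        rw [pow_succ]
        ring
      · rw [show n + 1 - 1 - n = 0 from by omega, hSfn, pow_succ]
        ring
    have hroot := root' x k
    rw [h1, hroot, Finset.mul_sum]
    rw [Finset.sum_range_succ' (fun j => (-1 : F) ^ (n + 1 - 1 - j) * Sf x (M + 1) j * (x k) ^ j)]
    rw [Finset.sum_range_succ' (fun j => hfun x (M - (n + 1) + 1)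
      * ((-1 : F) ^ (n + 1 - 1 - j) * el (List.ofFn x) (n + 1 - j) * (x k) ^ j))]
    have hs0 : Sf x (M + 1) 0 = hfun x (M - (n + 1) + 1) * el (List.ofFn x) (n + 1) :=
      Sf_zero_succ x (by omega) hM
    have hs1 : ∀ j ∈ range n,
        (-1 : F) ^ (n + 1 - 1 - (j + 1)) * Sf x (M + 1) (j + 1) * (x k) ^ (j + 1)
          = hfun x (M - (n + 1) + 1) * ((-1 : F) ^ (n + 1 - 1 - (j + 1))
              * el (List.ofFn x) (n + 1 - (j + 1)) * (x k) ^ (j + 1))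
            - (-1 : F) ^ (n + 1 - 1 - (j + 1)) * Sf x M j * (x k) ^ (j + 1) := by
      intro j hj
      have hjn : j < n := Finset.mem_range.mp hj
      rw [Sf_succ x (by omega : j + 1 < n + 1) hM]
      ring
    rw [Finset.sum_congr rfl hs1, Finset.sum_sub_distrib, hs0]
    have hS1 : ∑ j ∈ range n, (-1 : F) ^ (n + 1 - 1 - j) * Sf x M j * (x k) ^ (j + 1)
        = -∑ j ∈ range n, (-1 : F) ^ (n + 1 - 1 - (j + 1)) * Sf x M j * (x k) ^ (j + 1) := by
      rw [← Finset.sum_neg_distrib]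
      apply Finset.sum_congr rfl
      intro j hj
      have hjn : j < n := Finset.mem_range.mp hj
      rw [show n + 1 - 1 - j = (n + 1 - 1 - (j + 1)) + 1 from by omega, pow_succ]
      ring
    rw [hS1]
    simp only [Nat.sub_zero, pow_zero]
    ring

end HadAux

/-- Every Hadamard power `A^{∘M}` with `M ≥ N` is a combination of the Hadamard powers
`A^{∘0}, …, A^{∘(N-1)}` with diagonal-matrix coefficients given by Schur polynomials
of the rows of `A`. -/
theorem hadamardPow_eq_sum_lower_powers {F : Type*} [Field F] (N M : ℕ) (hN : 1 ≤ N)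
    (hMN : N ≤ M) (A : Matrix (Fin N) (Fin N) F) :
    (Matrix.of fun i k : Fin N => A i k ^ M) =
      ∑ j : Fin N,
        (Matrix.diagonal fun i => (-1 : F) ^ (N - (j : ℕ) - 1) * schurAt (A i) (hookP M N (j : ℕ)))
          * (Matrix.of fun i k : Fin N => A i k ^ (j : ℕ)) := by
  obtain ⟨n, rfl⟩ : ∃ n, N = n + 1 := ⟨N - 1, by omega⟩
  ext i k
  simp only [Matrix.of_apply, Matrix.sum_apply, Matrix.diagonal_mul]
  have hterm : ∀ j : Fin (n + 1),
      (-1 : F) ^ (n + 1 - (j : ℕ) - 1) * schurAt (A i) (hookP M (n + 1) (j : ℕ)) * A i k ^ (j : ℕ)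
        = (-1 : F) ^ (n + 1 - 1 - (j : ℕ)) * HadAux.Sf (A i) M (j : ℕ) * A i k ^ (j : ℕ) := by
    intro j
    rw [HadAux.schur_eq_S (A i) j.isLt hMN,
      show n + 1 - (j : ℕ) - 1 = n + 1 - 1 - (j : ℕ) from by omega]
    rfl
  rw [Finset.sum_congr rfl (fun j _ => hterm j), Fin.sum_univ_eq_sum_range
    (fun j => (-1 : F) ^ (n + 1 - 1 - j) * HadAux.Sf (A i) M j * A i k ^ j)]
  exact HadAux.key (A i) hMN k
end

section
/- Let 0 < ρ ≤ ∞ and let f(z) = Σ_{k≥0} c_k z^k be a real-analytic function on (−ρ, ρ) with real coefficients. If applying f entrywise maps every positive semidefinite rank-one N × N matrix with entries in (0, ρ) to a positive semidefinite matrix, then the first N nonzero Taylor coefficients of f are strictly positive. -/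
open Matrix BigOperators

set_option maxHeartbeats 1000000 in
open ENNReal in
/-- Horn-type lemma for analytic functions: if `f(x) = Σ_k c_k x^k` on `(-ρ, ρ)` maps
every rank-one psd matrix with entries in `(0, ρ)` entrywise into the psd cone
(`N × N` matrices), then the first `N` nonzero Taylor coefficients of `f` are positive. -/
theorem first_N_nonzero_coeffs_pos (ρ : ℝ≥0∞) (hρ : 0 < ρ) (N : ℕ) (hN : 1 ≤ N)
    (c : ℕ → ℝ) (f : ℝ → ℝ)
    (hf : ∀ x : ℝ, ENNReal.ofReal |x| < ρ → HasSum (fun k => c k * x ^ k) (f x))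
    (hpres : ∀ u : Fin N → ℝ, (∀ i, 0 < u i ∧ ENNReal.ofReal (u i ^ 2) < ρ) →
      (Matrix.of fun i k : Fin N => f (u i * u k)).PosSemidef) :
    ∀ k : ℕ, c k ≠ 0 → ((Finset.range k).filter fun j => c j ≠ 0).card < N → 0 < c k := by
  intro k hck hcard
  by_contra hpos
  have hkneg : c k < 0 := lt_of_le_of_ne (not_lt.mp hpos) hck
  set S := (Finset.range k).filter (fun j => c j ≠ 0) with hS
  -- pick a positive real x0 with ofReal x0 < ρ
  obtain ⟨x0, hx00, hx0ρ⟩ : ∃ x : ℝ, 0 < x ∧ ENNReal.ofReal x < ρ := by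
    rcases eq_or_ne ρ ⊤ with h | h
    · exact ⟨1, one_pos, by simp [h]⟩
    · have ht : 0 < ρ.toReal := ENNReal.toReal_pos hρ.ne' h
      exact ⟨ρ.toReal / 2, by positivity,
        (ENNReal.ofReal_lt_iff_lt_toReal (by positivity) h).2 (by linarith)⟩
  -- coefficient bound
  have hsum0 : Summable (fun j => |c j * x0 ^ j|) :=
    ((hf x0 (by rwa [abs_of_pos hx00])).summable).abs
  set Mc := ∑' j, |c j * x0 ^ j| with hMcdef
  have hMcb : ∀ j, |c j| * x0 ^ j ≤ Mc := by
    intro j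
    have := Summable.le_tsum hsum0 j (fun i _ => abs_nonneg _)
    rwa [abs_mul, abs_pow, abs_of_pos hx00] at this
  have hMc0 : 0 < Mc :=
    lt_of_lt_of_le (mul_pos (abs_pos.2 hck) (pow_pos hx00 k)) (hMcb k)
  -- the polynomial
  set Q : Polynomial ℝ := ∏ n ∈ S, (Polynomial.X - Polynomial.C ((2:ℝ)^n)) with hQ
  have hQmonic : Q.Monic := Polynomial.monic_prod_of_monic _ _
    (fun n _ => Polynomial.monic_X_sub_C _)
  have hQdeg : Q.natDegree = S.card := by
    rw [hQ, Polynomial.natDegree_prod _ _ (fun n _ => Polynomial.X_sub_C_ne_zero _)]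
    rw [Finset.sum_congr rfl (fun n _ => Polynomial.natDegree_X_sub_C (x := (2:ℝ)^n))]
    simp
  have hdegN : Q.natDegree < N := by rw [hQdeg]; exact hcard
  set v : Fin N → ℝ := fun i => Q.coeff i with hv
  set w : Fin N → ℝ := fun i => 2 ^ (i:ℕ) with hw
  set s : ℕ → ℝ := fun j => Q.eval ((2:ℝ)^j) with hs
  have hsv : ∀ j, s j = ∑ i : Fin N, v i * (w i) ^ j := by
    intro j
    rw [hs]
    simp only [hv, hw]
    rw [Fin.sum_univ_eq_sum_range (fun m => Q.coeff m * ((2:ℝ)^m)^j) N,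
      Polynomial.eval_eq_sum_range' hdegN]
    refine Finset.sum_congr rfl fun i _ => ?_
    rw [← pow_mul, ← pow_mul, Nat.mul_comm j i, mul_comm]
  have hszero : ∀ n ∈ S, s n = 0 := by
    intro n hn
    simp only [hs, hQ, Polynomial.eval_prod]
    exact Finset.prod_eq_zero hn (by simp)
  have hskne : s k ≠ 0 := by
    simp only [hs, hQ, Polynomial.eval_prod]
    refine Finset.prod_ne_zero_iff.2 (fun n hn => ?_)
    have hnk : n < k := Finset.mem_range.1 (Finset.mem_filter.1 hn).1
    have h2 : (2:ℝ)^n < 2^k := pow_lt_pow_right₀ (by norm_num) hnk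
    simp only [Polynomial.eval_sub, Polynomial.eval_X, Polynomial.eval_C]
    exact sub_ne_zero.2 h2.ne'
  -- size constants
  set C : ℝ := ∑ i : Fin N, |v i| with hC
  have hC1 : (1:ℝ) ≤ C := by
    have h1 : |v ⟨Q.natDegree, hdegN⟩| = 1 := by
      simp [hv, hQmonic.coeff_natDegree]
    calc (1:ℝ) = |v ⟨Q.natDegree, hdegN⟩| := h1.symm
    _ ≤ C := Finset.single_le_sum (f := fun i => |v i|) (fun i _ => abs_nonneg _)
        (Finset.mem_univ _)
  have hC0 : 0 < C := lt_of_lt_of_le one_pos hC1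
  set V : ℝ := 2 ^ N with hV
  set W : ℝ := 4 ^ N with hW
  have hW0 : (0:ℝ) < W := by positivity
  have hVV : V * V = W := by rw [hV, hW, ← mul_pow]; norm_num
  have hwle : ∀ i : Fin N, w i ≤ V := by
    intro i
    exact pow_le_pow_right₀ one_le_two i.isLt.le
  have hw0 : ∀ i : Fin N, (0:ℝ) < w i := fun i => pow_pos two_pos _
  have hww : ∀ i l : Fin N, w i * w l ≤ W := by
    intro i l
    rw [← hVV]
    exact mul_le_mul (hwle i) (hwle l) (hw0 l).le (by positivity)
  -- bound on s j ^ 2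
  have hsb : ∀ j, s j ^ 2 ≤ C ^ 2 * W ^ j := by
    intro j
    have h1 : |s j| ≤ C * V ^ j := by
      rw [hsv j]
      calc |∑ i : Fin N, v i * w i ^ j| ≤ ∑ i : Fin N, |v i * w i ^ j| :=
            Finset.abs_sum_le_sum_abs _ _
      _ ≤ ∑ i : Fin N, |v i| * V ^ j := by
            refine Finset.sum_le_sum fun i _ => ?_
            rw [abs_mul, abs_pow, abs_of_pos (hw0 i)]
            exact mul_le_mul_of_nonneg_left (pow_le_pow_left₀ (hw0 i).le (hwle i) j)
              (abs_nonneg _)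
      _ = C * V ^ j := by rw [← Finset.sum_mul]
    calc s j ^ 2 = |s j| ^ 2 := (sq_abs _).symm
    _ ≤ (C * V ^ j) ^ 2 := by
        exact pow_le_pow_left₀ (abs_nonneg _) h1 2
    _ = C ^ 2 * W ^ j := by
        rw [← hVV]; ring
  -- choose δ
  set B : ℝ := (-c k) * s k ^ 2 with hBdef
  have hB : 0 < B := mul_pos (by linarith) (by positivity)
  set A : ℝ := 2 * Mc * C ^ 2 * (W / x0) ^ (k+1) with hAdef
  have hA : 0 < A := by positivity
  set δ : ℝ := min (x0 / (2 * W)) (B / (2 * A)) with hδdef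
  have hδ : 0 < δ := lt_min (by positivity) (by positivity)
  have hδW : δ * W ≤ x0 / 2 := by
    have h1 : δ ≤ x0 / (2 * W) := min_le_left _ _
    calc δ * W ≤ x0 / (2 * W) * W := by gcongr
    _ = x0 / 2 := by field_simp
  have hAδ : A * δ ≤ B / 2 := by
    have h1 : δ ≤ B / (2 * A) := min_le_right _ _
    calc A * δ ≤ A * (B / (2 * A)) := by gcongr
    _ = B / 2 := by field_simp
  set r : ℝ := δ * W / x0 with hrdef
  have hr0 : 0 ≤ r := by positivity
  have hr2 : r ≤ 1/2 := by
    rw [hrdef, div_le_iff₀ hx00]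
    linarith
  -- the vector u
  set u : Fin N → ℝ := fun i => Real.sqrt δ * w i with hu'
  have huul : ∀ i l : Fin N, u i * u l = δ * (w i * w l) := by
    intro i l
    simp only [hu']
    rw [show Real.sqrt δ * w i * (Real.sqrt δ * w l)
        = (Real.sqrt δ * Real.sqrt δ) * (w i * w l) by ring,
      Real.mul_self_sqrt hδ.le]
  have hprod : ∀ i l : Fin N, u i * u l ≤ x0 := by
    intro i l
    rw [huul i l]
    calc δ * (w i * w l) ≤ δ * W := by
          exact mul_le_mul_of_nonneg_left (hww i l) hδ.le
    _ ≤ x0 / 2 := hδW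
    _ ≤ x0 := by linarith
  have hupos : ∀ i, 0 < u i := fun i => mul_pos (Real.sqrt_pos.2 hδ) (hw0 i)
  have hu : ∀ i, 0 < u i ∧ ENNReal.ofReal (u i ^ 2) < ρ := by
    intro i
    refine ⟨hupos i, ?_⟩
    calc ENNReal.ofReal (u i ^ 2) ≤ ENNReal.ofReal x0 :=
          ENNReal.ofReal_le_ofReal (by rw [sq]; exact hprod i i)
    _ < ρ := hx0ρ
  -- the quadratic form
  set T : ℝ := ∑ p : Fin N × Fin N, v p.1 * v p.2 * f (u p.1 * u p.2) with hT
  have hT0 : 0 ≤ T := by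
    have h := (hpres u hu).dotProduct_mulVec_nonneg v
    refine le_trans h (le_of_eq ?_)
    rw [hT, Fintype.sum_prod_type]
    rw [dotProduct]
    refine Finset.sum_congr rfl fun i _ => ?_
    rw [Matrix.mulVec, dotProduct, Finset.mul_sum]
    refine Finset.sum_congr rfl fun l _ => ?_
    simp [Matrix.of_apply]
    ring
  -- the key HasSum identity
  have key : ∀ j, (∑ p : Fin N × Fin N, v p.1 * v p.2 * (c j * (u p.1 * u p.2) ^ j))
      = c j * δ ^ j * s j ^ 2 := by
    intro j
    rw [Fintype.sum_prod_type, hsv j, sq, Finset.sum_mul_sum, Finset.mul_sum]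
    refine Finset.sum_congr rfl fun i _ => ?_
    rw [Finset.mul_sum]
    refine Finset.sum_congr rfl fun l _ => ?_
    rw [huul, mul_pow, mul_pow]
    ring
  have hG : HasSum (fun j => c j * δ ^ j * s j ^ 2) T := by
    have h1 : ∀ p : Fin N × Fin N,
        HasSum (fun j => v p.1 * v p.2 * (c j * (u p.1 * u p.2) ^ j))
          (v p.1 * v p.2 * f (u p.1 * u p.2)) := by
      intro p
      refine (hf _ ?_).mul_left _
      rw [abs_of_pos (mul_pos (hupos p.1) (hupos p.2))]
      calc ENNReal.ofReal (u p.1 * u p.2) ≤ ENNReal.ofReal x0 :=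
            ENNReal.ofReal_le_ofReal (hprod p.1 p.2)
      _ < ρ := hx0ρ
    have h2 := hasSum_sum (s := (Finset.univ : Finset (Fin N × Fin N)))
      (fun p _ => h1 p)
    rw [← hT] at h2
    have h3 : (fun j => ∑ p : Fin N × Fin N, v p.1 * v p.2 * (c j * (u p.1 * u p.2) ^ j))
        = fun j => c j * δ ^ j * s j ^ 2 := funext key
    rwa [h3] at h2
  -- decompose into finite part and tail
  have hdecomp : (∑ j ∈ Finset.range (k+1), c j * δ ^ j * s j ^ 2)
      + (∑' j, c (j+(k+1)) * δ ^ (j+(k+1)) * s (j+(k+1)) ^ 2) = T := by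
    rw [← hG.tsum_eq]
    exact Summable.sum_add_tsum_nat_add (k+1) hG.summable
  have hfin : (∑ j ∈ Finset.range (k+1), c j * δ ^ j * s j ^ 2)
      = c k * δ ^ k * s k ^ 2 := by
    rw [Finset.sum_range_succ]
    have h0 : (∑ j ∈ Finset.range k, c j * δ ^ j * s j ^ 2) = 0 := by
      refine Finset.sum_eq_zero fun j hj => ?_
      by_cases h : c j = 0
      · simp [h]
      · have hjS : j ∈ S := Finset.mem_filter.2 ⟨hj, h⟩
        simp [hszero j hjS]
    rw [h0, zero_add]
  -- bound on general term
  have hGb : ∀ n, c n * δ ^ n * s n ^ 2 ≤ Mc * C ^ 2 * r ^ n := by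
    intro n
    have h1 : c n * δ ^ n * s n ^ 2 ≤ |c n| * δ ^ n * s n ^ 2 := by
      have hX : (0:ℝ) ≤ δ ^ n * s n ^ 2 := by positivity
      calc c n * δ ^ n * s n ^ 2 = c n * (δ ^ n * s n ^ 2) := by ring
      _ ≤ |c n| * (δ ^ n * s n ^ 2) := mul_le_mul_of_nonneg_right (le_abs_self _) hX
      _ = |c n| * δ ^ n * s n ^ 2 := by ring
    have h2 : |c n| * δ ^ n * s n ^ 2 ≤ |c n| * δ ^ n * (C ^ 2 * W ^ n) := by
      have h3 : (0:ℝ) ≤ |c n| * δ ^ n := by positivity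
      exact mul_le_mul_of_nonneg_left (hsb n) h3
    have h4 : |c n| * δ ^ n * (C ^ 2 * W ^ n)
        = (|c n| * x0 ^ n) * C ^ 2 * r ^ n := by
      rw [hrdef, div_pow, mul_pow]
      field_simp
    have h5 : (|c n| * x0 ^ n) * C ^ 2 * r ^ n ≤ Mc * C ^ 2 * r ^ n := by
      have h6 : (0:ℝ) ≤ C ^ 2 * r ^ n := by positivity
      calc (|c n| * x0 ^ n) * C ^ 2 * r ^ n = (|c n| * x0 ^ n) * (C ^ 2 * r ^ n) := by ring
      _ ≤ Mc * (C ^ 2 * r ^ n) := mul_le_mul_of_nonneg_right (hMcb n) h6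
      _ = Mc * C ^ 2 * r ^ n := by ring
    calc c n * δ ^ n * s n ^ 2 ≤ |c n| * δ ^ n * (C ^ 2 * W ^ n) := le_trans h1 h2
    _ = (|c n| * x0 ^ n) * C ^ 2 * r ^ n := h4
    _ ≤ Mc * C ^ 2 * r ^ n := h5
  -- tail bound
  have hsummG : Summable (fun j => c (j+(k+1)) * δ ^ (j+(k+1)) * s (j+(k+1)) ^ 2) :=
    (summable_nat_add_iff (k+1)).2 hG.summable
  have htail : (∑' j, c (j+(k+1)) * δ ^ (j+(k+1)) * s (j+(k+1)) ^ 2)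
      ≤ Mc * C ^ 2 * r ^ (k+1) * 2 := by
    have hb : ∀ j, c (j+(k+1)) * δ ^ (j+(k+1)) * s (j+(k+1)) ^ 2
        ≤ (Mc * C ^ 2 * r ^ (k+1)) * (1/2:ℝ) ^ j := by
      intro j
      calc c (j+(k+1)) * δ ^ (j+(k+1)) * s (j+(k+1)) ^ 2
          ≤ Mc * C ^ 2 * r ^ (j+(k+1)) := hGb _
      _ = (Mc * C ^ 2 * r ^ (k+1)) * r ^ j := by rw [pow_add]; ring
      _ ≤ (Mc * C ^ 2 * r ^ (k+1)) * (1/2:ℝ) ^ j := by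
          have h6 : (0:ℝ) ≤ Mc * C ^ 2 * r ^ (k+1) := by positivity
          exact mul_le_mul_of_nonneg_left (pow_le_pow_left₀ hr0 hr2 j) h6
    have hbs : Summable (fun j : ℕ => (Mc * C ^ 2 * r ^ (k+1)) * (1/2:ℝ) ^ j) :=
      (summable_geometric_of_lt_one (by norm_num) (by norm_num)).mul_left _
    calc (∑' j, c (j+(k+1)) * δ ^ (j+(k+1)) * s (j+(k+1)) ^ 2)
        ≤ ∑' j : ℕ, (Mc * C ^ 2 * r ^ (k+1)) * (1/2:ℝ) ^ j :=
          Summable.tsum_le_tsum hb hsummG hbs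
    _ = Mc * C ^ 2 * r ^ (k+1) * 2 := by
        rw [tsum_mul_left, tsum_geometric_of_lt_one (by norm_num) (by norm_num)]
        norm_num
  -- final contradiction
  have hre : Mc * C ^ 2 * r ^ (k+1) * 2 = A * δ * δ ^ k := by
    rw [hrdef, hAdef, show δ * W / x0 = δ * (W / x0) by ring, mul_pow, pow_succ]
    ring
  have hmain : c k * δ ^ k * s k ^ 2 = -(B * δ ^ k) := by rw [hBdef]; ring
  have hd : 0 < δ ^ k := pow_pos hδ k
  have hAδk : A * δ * δ ^ k ≤ B / 2 * δ ^ k :=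
    mul_le_mul_of_nonneg_right hAδ hd.le
  have htail' : (∑' j, c (j+(k+1)) * δ ^ (j+(k+1)) * s (j+(k+1)) ^ 2)
      ≤ A * δ * δ ^ k := by rw [← hre]; exact htail
  have hTle : T ≤ -(B * δ ^ k) + B / 2 * δ ^ k := by
    rw [← hdecomp, hfin, hmain]
    linarith [htail', hAδk]
  have hhalf : B / 2 * δ ^ k = (B * δ ^ k) / 2 := by ring
  have hBd : 0 < B * δ ^ k := mul_pos hB hd
  linarith
end

section
/- Fix positive reals c_0,...,c_{N-1} and define h_c(z) = Σ_{j=0}^{N-1} c_j z^j. For every N × N complex positive semidefinite matrix A, the kernel of h_c[A] (entrywise application) equals the intersection over all n ≥ 0 of the kernels of the Hadamard powers A^{∘n}. -/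
open Matrix BigOperators

open ComplexOrder in
lemma schur_psd {N : ℕ} {A C : Matrix (Fin N) (Fin N) ℂ}
    (hA : A.PosSemidef) (hC : C.PosSemidef) :
    (Matrix.of fun i k => A i k * C i k).PosSemidef := by
  obtain ⟨B, hB⟩ : ∃ B : Matrix (Fin N) (Fin N) ℂ, C = Bᴴ * B := by
    open scoped MatrixOrder in
    obtain ⟨B, hB⟩ := CStarAlgebra.nonneg_iff_eq_star_mul_self.mp hC.nonneg
    exact ⟨B, hB⟩
  refine Matrix.PosSemidef.of_dotProduct_mulVec_nonneg ?_ ?_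
  · ext i k
    simp only [Matrix.conjTranspose_apply, Matrix.of_apply, star_mul']
    rw [← hA.1.apply i k, ← hC.1.apply i k]
  · intro x
    have hCik : ∀ i k, C i k = ∑ m, star (B m i) * B m k := by
      intro i k
      rw [hB]; simp [Matrix.mul_apply, Matrix.conjTranspose_apply]
    have key : star x ⬝ᵥ (Matrix.of fun i k => A i k * C i k) *ᵥ x
        = ∑ m, star (fun k => B m k * x k) ⬝ᵥ A *ᵥ (fun k => B m k * x k) := by
      simp only [dotProduct, Matrix.mulVec, Matrix.of_apply, Pi.star_apply,
        Finset.mul_sum]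
      conv_rhs => rw [Finset.sum_comm]
      refine Finset.sum_congr rfl fun i _ => ?_
      conv_rhs => rw [Finset.sum_comm]
      refine Finset.sum_congr rfl fun k _ => ?_
      rw [hCik i k]
      simp only [Finset.mul_sum, Finset.sum_mul, star_mul']
      refine Finset.sum_congr rfl fun m _ => ?_
      ring
    rw [key]
    exact Finset.sum_nonneg fun m _ => hA.dotProduct_mulVec_nonneg _

open ComplexOrder in
lemma hadamard_pow_psd {N : ℕ} {A : Matrix (Fin N) (Fin N) ℂ} (hA : A.PosSemidef) (n : ℕ) :
    (Matrix.of fun i k : Fin N => A i k ^ n).PosSemidef := by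
  induction n with
  | zero =>
    simp only [pow_zero]
    refine Matrix.PosSemidef.of_dotProduct_mulVec_nonneg ?_ ?_
    · ext i k; simp
    · intro x
      have : star x ⬝ᵥ (Matrix.of fun _ _ : Fin N => (1:ℂ)) *ᵥ x
          = star (∑ k, x k) * (∑ k, x k) := by
        simp [dotProduct, Matrix.mulVec, Finset.mul_sum, Finset.sum_mul, mul_comm]
      rw [this]
      exact star_mul_self_nonneg _
  | succ n ih =>
    have h2 := schur_psd ih hA
    have : (Matrix.of fun i k : Fin N => A i k ^ (n+1))
        = Matrix.of fun i k => (Matrix.of fun i k : Fin N => A i k ^ n) i k * A i k := by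
      ext i k; simp [pow_succ]
    rw [this]; exact h2

lemma vdm_key {N : ℕ} (a v : Fin N → ℂ)
    (h : ∀ j : Fin N, ∑ k, v k * a k ^ (j : ℕ) = 0) (n : ℕ) :
    ∑ k, v k * a k ^ n = 0 := by
  rcases Nat.eq_zero_or_pos N with hN | hN
  · subst hN; simp
  have hsum : ∀ j : ℕ, j < N → ∑ k, v k * a k ^ j = 0 := fun j hj => h ⟨j, hj⟩
  set s : Finset ℂ := Finset.image a Finset.univ with hs
  have hcard : s.card ≤ N := le_trans (Finset.card_image_le) (by simp)
  set p : Polynomial ℂ := Lagrange.interpolate s id (fun x => x ^ n) with hp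
  have hinj : Set.InjOn (id : ℂ → ℂ) s := Function.injective_id.injOn
  have heval : ∀ k : Fin N, p.eval (a k) = a k ^ n := by
    intro k
    have hmem : a k ∈ s := Finset.mem_image_of_mem a (Finset.mem_univ k)
    exact Lagrange.eval_interpolate_at_node (fun x => x ^ n) hinj hmem
  have hdeg : p.natDegree < N := by
    have hd := Lagrange.degree_interpolate_lt (fun x => x ^ n) hinj
    rcases eq_or_ne p 0 with h0 | h0
    · rw [h0]; simpa using hN
    · have := Polynomial.natDegree_lt_iff_degree_lt h0 |>.mpr
        (lt_of_lt_of_le hd (by exact_mod_cast hcard))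
      exact_mod_cast this
  calc ∑ k, v k * a k ^ n = ∑ k, v k * p.eval (a k) := by
        simp_rw [heval]
    _ = ∑ k, v k * ∑ j ∈ Finset.range (p.natDegree + 1), p.coeff j * a k ^ j := by
        refine Finset.sum_congr rfl fun k _ => ?_
        rw [Polynomial.eval_eq_sum_range]
    _ = ∑ j ∈ Finset.range (p.natDegree + 1), p.coeff j * ∑ k, v k * a k ^ j := by
        simp_rw [Finset.mul_sum]
        rw [Finset.sum_comm]
        refine Finset.sum_congr rfl fun j _ => ?_
        exact Finset.sum_congr rfl fun k _ => by ring
    _ = 0 := by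
        refine Finset.sum_eq_zero fun j hj => ?_
        rw [hsum j (lt_of_lt_of_le (Finset.mem_range.mp hj) hdeg), mul_zero]


open ComplexOrder in
/-- The kernel of `h_c[A] = c_0 J + c_1 A + ⋯ + c_{N-1} A^{∘(N-1)}` equals the
simultaneous kernel of all Hadamard powers of `A`. -/
theorem ker_hc_eq_simultaneous_kernel (N : ℕ) (c : Fin N → ℝ) (hc : ∀ j, 0 < c j)
    (A : Matrix (Fin N) (Fin N) ℂ) (hA : A.PosSemidef) (v : Fin N → ℂ) :
    (∑ j : Fin N, (c j : ℂ) • Matrix.of fun i k : Fin N => A i k ^ (j : ℕ)).mulVec v = 0 ↔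
      ∀ n : ℕ, (Matrix.of fun i k : Fin N => A i k ^ n).mulVec v = 0 := by
  have hMpsd : ∀ m : ℕ, (Matrix.of fun i k : Fin N => A i k ^ m).PosSemidef :=
    fun m => hadamard_pow_psd hA m
  have hexp : (∑ j : Fin N, (c j : ℂ) • Matrix.of fun i k : Fin N => A i k ^ (j : ℕ)).mulVec v
      = ∑ j : Fin N, (c j : ℂ) • (Matrix.of fun i k : Fin N => A i k ^ (j : ℕ)).mulVec v := by
    funext i
    simp only [Matrix.mulVec, dotProduct, Finset.sum_apply, Matrix.sum_apply, Matrix.smul_apply,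
      Matrix.of_apply, smul_eq_mul, Finset.sum_mul, Finset.mul_sum, Pi.smul_apply]
    rw [Finset.sum_comm]
    exact Finset.sum_congr rfl fun j _ => Finset.sum_congr rfl fun k _ => by ring
  have dps : ∀ (w : Fin N → (Fin N → ℂ)), star v ⬝ᵥ (∑ j : Fin N, (c j : ℂ) • w j)
      = ∑ j : Fin N, (c j : ℂ) * (star v ⬝ᵥ w j) := by
    intro w
    simp only [dotProduct, Finset.sum_apply, Pi.smul_apply, smul_eq_mul,
      Finset.mul_sum, Pi.star_apply]
    rw [Finset.sum_comm]
    exact Finset.sum_congr rfl fun i _ => Finset.sum_congr rfl fun j _ => by ring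
  constructor
  · intro h
    -- each Hadamard power j < N kills v
    have hjker : ∀ j : Fin N, (Matrix.of fun i k : Fin N => A i k ^ (j : ℕ)).mulVec v = 0 := by
      have hdot : ∑ j : Fin N,
          (c j : ℂ) * (star v ⬝ᵥ (Matrix.of fun i k : Fin N => A i k ^ (j : ℕ)) *ᵥ v) = 0 := by
        rw [← dps]
        rw [← hexp, h, dotProduct_zero]
      have hnonneg : ∀ j ∈ Finset.univ, (0:ℂ) ≤
          (c j : ℂ) * (star v ⬝ᵥ (Matrix.of fun i k : Fin N => A i k ^ (j : ℕ)) *ᵥ v) :=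
        fun j _ => mul_nonneg (by exact_mod_cast (hc j).le) ((hMpsd j).dotProduct_mulVec_nonneg v)
      intro j
      have hterm := (Finset.sum_eq_zero_iff_of_nonneg hnonneg).mp hdot j (Finset.mem_univ j)
      have hcj : (c j : ℂ) ≠ 0 := by exact_mod_cast (hc j).ne'
      have : star v ⬝ᵥ (Matrix.of fun i k : Fin N => A i k ^ (j : ℕ)) *ᵥ v = 0 :=
        (mul_eq_zero.mp hterm).resolve_left hcj
      exact ((hMpsd (j : ℕ)).dotProduct_mulVec_zero_iff v).mp this
    intro n
    funext i
    have key := vdm_key (fun k => A i k) v (fun j => by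
      have := congrFun (hjker j) i
      simpa [Matrix.mulVec, dotProduct, mul_comm] using this) n
    simpa [Matrix.mulVec, dotProduct, mul_comm] using key
  · intro h
    rw [hexp]
    exact Finset.sum_eq_zero fun j _ => by rw [h (j : ℕ), smul_zero]
end
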